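/- arXiv:1205.5119 — 9 statements merged into one kernel-verified Lean document; each statement's English description precedes it below -/
import Mathlib

section
/- Let A be a finite-dimensional symmetric algebra over a field K (i.e. there is a symmetric K-linear form f: A → K whose kernel contains no nonzero left or right ideal of A). If ρ ∈ A is a nonzero element, then there exists ρ₁ ∈ A such that both ρ·ρ₁ ≠ 0 and ρ₁·ρ ≠ 0. -/
/-- If `A` is a finite-dimensional symmetric `K`-algebra (there is a symmetric linear form
`f : A → K` whose kernel contains no nonzero left or right ideal), then for every nonzero
`ρ ∈ A` there is `ρ₁` with `ρ * ρ₁ ≠ 0` and `ρ₁ * ρ ≠ 0`. -/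
theorem stmt0 (K A : Type*) [Field K] [Ring A] [Algebra K A] [FiniteDimensional K A]
    (f : A →ₗ[K] K)
    (hsym : ∀ a b : A, f (a * b) = f (b * a))
    (hL : ∀ x : A, (∀ a : A, f (a * x) = 0) → x = 0)
    (hR : ∀ x : A, (∀ a : A, f (x * a) = 0) → x = 0)
    (ρ : A) (hρ : ρ ≠ 0) :
    ∃ ρ₁ : A, ρ * ρ₁ ≠ 0 ∧ ρ₁ * ρ ≠ 0 := by
  by_contra h
  push_neg at h
  apply hρ
  apply hR
  intro a
  by_contra hfa
  have h1 : ρ * a ≠ 0 := fun e => hfa (by rw [e, map_zero])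
  have h2 : a * ρ ≠ 0 := fun e => hfa (by rw [hsym, e, map_zero])
  exact h2 (h a h1)
end

section
/- Let K be a field and s, t ≥ 2 integers. In the K-algebra Λ = K[X,Y]/(XY, X^s − Y^t), the Jacobson radical is generated by the images of X and Y, and the socle of Λ (the annihilator of the Jacobson radical) is one-dimensional, spanned by the image of X^s. -/
open MvPolynomial

noncomputable abbrev lamIdeal (K : Type*) [Field K] (s t : ℕ) : Ideal (MvPolynomial (Fin 2) K) :=
  Ideal.span {X 0 * X 1, X (0 : Fin 2) ^ s - X 1 ^ t}

abbrev lam (K : Type*) [Field K] (s t : ℕ) : Type _ :=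
  MvPolynomial (Fin 2) K ⧸ lamIdeal K s t

section auxLam
variable {K : Type*} [Field K] {s t : ℕ}

private lemma g1_mem : (X 0 * X 1 : MvPolynomial (Fin 2) K) ∈ lamIdeal K s t :=
  Ideal.subset_span (by simp)

private lemma g2_mem : (X (0:Fin 2) ^ s - X 1 ^ t : MvPolynomial (Fin 2) K) ∈ lamIdeal K s t :=
  Ideal.subset_span (by simp)

private lemma Xs1_mem (ht : 1 ≤ t) :
    (X (0:Fin 2) ^ (s+1) : MvPolynomial (Fin 2) K) ∈ lamIdeal K s t := by
  obtain ⟨t', rfl⟩ := Nat.exists_eq_add_of_le ht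
  have h : (X (0:Fin 2) ^ (s+1) : MvPolynomial (Fin 2) K)
      = X 0 * (X 0 ^ s - X 1 ^ (1+t')) + X 1 ^ t' * (X 0 * X 1) := by ring
  rw [h]
  exact Ideal.add_mem _ (Ideal.mul_mem_left _ _ g2_mem) (Ideal.mul_mem_left _ _ g1_mem)

private lemma Yt1_mem (hs : 1 ≤ s) :
    (X (1:Fin 2) ^ (t+1) : MvPolynomial (Fin 2) K) ∈ lamIdeal K s t := by
  obtain ⟨s', rfl⟩ := Nat.exists_eq_add_of_le hs
  have h : (X (1:Fin 2) ^ (t+1) : MvPolynomial (Fin 2) K)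
      = (- X 1) * (X 0 ^ (1+s') - X 1 ^ t) + X 0 ^ s' * (X 0 * X 1) := by ring
  rw [h]
  exact Ideal.add_mem _ (Ideal.mul_mem_left _ _ g2_mem) (Ideal.mul_mem_left _ _ g1_mem)

private lemma fin2_finsupp (m : Fin 2 →₀ ℕ) :
    m = Finsupp.single 0 (m 0) + Finsupp.single 1 (m 1) := by
  ext i
  fin_cases i <;> simp [Finsupp.single_apply]

private lemma monomial_expand (m : Fin 2 →₀ ℕ) (c : K) :
    (monomial m c : MvPolynomial (Fin 2) K) = C c * (X 0 ^ (m 0) * X 1 ^ (m 1)) := by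
  rw [X_pow_eq_monomial, X_pow_eq_monomial, monomial_mul, C_mul_monomial, mul_one, mul_one,
    ← fin2_finsupp]

private lemma monomial_mem (hs : 1 ≤ s) (ht : 1 ≤ t) (m : Fin 2 →₀ ℕ) (c : K)
    (h : (m 0 ≠ 0 ∧ m 1 ≠ 0) ∨ (m 1 = 0 ∧ s < m 0) ∨ (m 0 = 0 ∧ t < m 1)) :
    (monomial m c : MvPolynomial (Fin 2) K) ∈ lamIdeal K s t := by
  rw [monomial_expand]
  rcases h with ⟨h0, h1⟩ | ⟨h1, h0⟩ | ⟨h0, h1⟩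
  · obtain ⟨a, ha⟩ := Nat.exists_eq_add_of_le (Nat.one_le_iff_ne_zero.mpr h0)
    obtain ⟨b, hb⟩ := Nat.exists_eq_add_of_le (Nat.one_le_iff_ne_zero.mpr h1)
    rw [ha, hb]
    have : (C c * (X (0:Fin 2) ^ (1+a) * X 1 ^ (1+b)) : MvPolynomial (Fin 2) K)
        = (C c * (X 0 ^ a * X 1 ^ b)) * (X 0 * X 1) := by ring
    rw [this]
    exact Ideal.mul_mem_left _ _ g1_mem
  · obtain ⟨a, ha⟩ := Nat.exists_eq_add_of_le h0
    rw [ha, h1]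
    have : (C c * (X (0:Fin 2) ^ (s + 1 + a) * X 1 ^ 0) : MvPolynomial (Fin 2) K)
        = (C c * X 0 ^ a) * (X 0 ^ (s+1)) := by ring
    rw [this]
    exact Ideal.mul_mem_left _ _ (Xs1_mem ht)
  · obtain ⟨b, hb⟩ := Nat.exists_eq_add_of_le h1
    rw [hb, h0]
    have : (C c * (X (0:Fin 2) ^ 0 * X 1 ^ (t + 1 + b)) : MvPolynomial (Fin 2) K)
        = (C c * X 1 ^ b) * (X 1 ^ (t+1)) := by ring
    rw [this]
    exact Ideal.mul_mem_left _ _ (Yt1_mem hs)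

private lemma e1 : (X 0 * X 1 : MvPolynomial (Fin 2) K)
    = monomial (Finsupp.single 0 1 + Finsupp.single 1 1) 1 := by
  rw [← pow_one (X (0:Fin 2)), ← pow_one (X (1:Fin 2)), X_pow_eq_monomial, X_pow_eq_monomial,
    monomial_mul, one_mul]

private lemma hle (m : Fin 2 →₀ ℕ) :
    (Finsupp.single 0 1 + Finsupp.single 1 1 ≤ m) ↔ (1 ≤ m 0 ∧ 1 ≤ m 1) := by
  rw [Finsupp.le_def, Fin.forall_fin_two]
  simp [Finsupp.single_apply]


private lemma sne_same (i : Fin 2) {a b : ℕ} (h : a ≠ b) :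
    Finsupp.single i a ≠ Finsupp.single i b :=
  fun he => h (by simpa using congrArg (fun f => f i) he)

private lemma sne_diff {a b : ℕ} (hb : b ≠ 0) :
    Finsupp.single (0:Fin 2) a ≠ Finsupp.single 1 b :=
  fun he => hb (by simpa [Finsupp.single_apply] using (congrArg (fun f => f 1) he).symm)

private lemma sne_diff' {a b : ℕ} (ha : a ≠ 0) :
    Finsupp.single (0:Fin 2) a ≠ Finsupp.single 1 b :=
  fun he => ha (by simpa [Finsupp.single_apply] using congrArg (fun f => f 0) he)

set_option linter.unreachableTactic false in
set_option linter.unusedTactic false in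
private lemma coeff_of_mem (hs : 1 ≤ s) (ht : 1 ≤ t) {p : MvPolynomial (Fin 2) K}
    (hp : p ∈ lamIdeal K s t) :
    (∀ i < s, coeff (Finsupp.single 0 i) p = 0) ∧
    (∀ j < t, coeff (Finsupp.single 1 j) p = 0) ∧
    coeff (Finsupp.single 0 s) p + coeff (Finsupp.single 1 t) p = 0 := by
  have f01 : (0:Fin 2) ≠ 1 := by decide
  have f10 : (1:Fin 2) ≠ 0 := by decide
  rw [Ideal.mem_span_pair] at hp
  obtain ⟨f, g, rfl⟩ := hp
  refine ⟨fun i hi => ?_, fun j hj => ?_, ?_⟩ <;>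
    simp only [coeff_add, mul_sub, coeff_sub, e1, X_pow_eq_monomial, coeff_mul_monomial',
      hle, Finsupp.single_le_iff, Finsupp.single_apply, f01, f10, if_false, if_true,
      tsub_self] <;>
    split_ifs <;>
    first
      | ring1
      | omega
      | (exfalso; omega)
      | (simp; try ring1)

private lemma mem_of_coeff (hs : 1 ≤ s) (ht : 1 ≤ t) {p : MvPolynomial (Fin 2) K}
    (h0 : ∀ i ≤ s, coeff (Finsupp.single 0 i) p = 0)
    (h1 : ∀ j ≤ t, coeff (Finsupp.single 1 j) p = 0) :
    p ∈ lamIdeal K s t := by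
  nth_rewrite 1 [p.as_sum]
  apply Ideal.sum_mem
  intro m hm
  apply monomial_mem hs ht
  rcases eq_or_ne (m 1) 0 with h|h
  · rcases eq_or_ne (m 0) 0 with h'|h'
    · exfalso
      have hm0 : m = Finsupp.single 0 0 := by
        ext i; fin_cases i <;> simp [Finsupp.single_apply, h, h']
      rw [mem_support_iff, hm0] at hm
      exact hm (h0 0 (Nat.zero_le _))
    · refine Or.inr (Or.inl ⟨h, ?_⟩)
      by_contra hle
      push_neg at hle
      have hm0 : m = Finsupp.single 0 (m 0) := by
        ext i; fin_cases i <;> simp [Finsupp.single_apply, h]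
      rw [mem_support_iff, hm0] at hm
      exact hm (h0 _ hle)
  · rcases eq_or_ne (m 0) 0 with h'|h'
    · refine Or.inr (Or.inr ⟨h', ?_⟩)
      by_contra hle
      push_neg at hle
      have hm0 : m = Finsupp.single 1 (m 1) := by
        ext i; fin_cases i <;> simp [Finsupp.single_apply, h']
      rw [mem_support_iff, hm0] at hm
      exact hm (h1 _ hle)
    · exact Or.inl ⟨h', h⟩

private lemma spanX_eq_ker :
    (Ideal.span {X (0:Fin 2), X 1} : Ideal (MvPolynomial (Fin 2) K)) =
      RingHom.ker (constantCoeff (σ := Fin 2) (R := K)) := by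
  have himg : ({X (0:Fin 2), X 1} : Set (MvPolynomial (Fin 2) K))
      = MvPolynomial.X '' Set.univ := by
    ext q
    simp [Set.image_univ, Fin.exists_fin_two, eq_comm]
  ext p
  rw [RingHom.mem_ker, himg, mem_ideal_span_X_image]
  constructor
  · intro h
    rw [constantCoeff_eq]
    by_cases h0 : (0 : Fin 2 →₀ ℕ) ∈ p.support
    · obtain ⟨i, _, hi⟩ := h 0 h0
      simp at hi
    · simpa using (notMem_support_iff.mp h0)
  · intro h m hm
    by_contra hc
    push_neg at hc
    have hm0 : m = 0 := by ext i; simpa using hc i (Set.mem_univ i)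
    rw [constantCoeff_eq] at h
    rw [hm0, mem_support_iff] at hm
    exact hm h

private lemma spanX_maximal :
    (Ideal.span {X (0:Fin 2), X 1} : Ideal (MvPolynomial (Fin 2) K)).IsMaximal := by
  rw [spanX_eq_ker]
  exact RingHom.ker_isMaximal_of_surjective _ (fun x => ⟨C x, constantCoeff_C _ x⟩)

end auxLam

/-- In `Λ = K[X,Y]/(XY, X^s - Y^t)` with `s, t ≥ 2`, the Jacobson radical is generated by the
images of `X` and `Y`, and the socle (annihilator of the radical) is one-dimensional, spanned
by the image of `X^s`. -/
theorem stmt3 (K : Type*) [Field K] (s t : ℕ) (hs : 2 ≤ s) (ht : 2 ≤ t) :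
    (Ideal.jacobson (⊥ : Ideal (lam K s t)) =
      Ideal.span {Ideal.Quotient.mk (lamIdeal K s t) (X 0),
        Ideal.Quotient.mk (lamIdeal K s t) (X 1)}) ∧
    Ideal.Quotient.mk (lamIdeal K s t) (X (0 : Fin 2) ^ s) ≠ 0 ∧
    {x : lam K s t | ∀ y ∈ Ideal.span {Ideal.Quotient.mk (lamIdeal K s t) (X 0),
        Ideal.Quotient.mk (lamIdeal K s t) (X 1)}, y * x = 0} =
      Set.range (fun c : K => c • Ideal.Quotient.mk (lamIdeal K s t) (X (0 : Fin 2) ^ s)) := by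
  have hs1 : 1 ≤ s := by omega
  have ht1 : 1 ≤ t := by omega
  have f01 : (0:Fin 2) ≠ 1 := by decide
  refine ⟨?_, ?_, ?_⟩
  · -- Jacobson radical
    apply le_antisymm
    · have hx0 : (X (0:Fin 2) : MvPolynomial (Fin 2) K) ∈ Ideal.span {X (0:Fin 2), X 1} :=
        Ideal.subset_span (by simp)
      have hx1 : (X (1:Fin 2) : MvPolynomial (Fin 2) K) ∈ Ideal.span {X (0:Fin 2), X 1} :=
        Ideal.subset_span (by simp)
      have hker : lamIdeal K s t ≤ Ideal.span {X (0:Fin 2), X 1} := by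
        apply Ideal.span_le.mpr
        intro q hq
        simp only [Set.mem_insert_iff, Set.mem_singleton_iff] at hq
        rcases hq with rfl | rfl
        · exact Ideal.mul_mem_right _ _ hx0
        · exact Ideal.sub_mem _ (Ideal.pow_mem_of_mem _ hx0 s hs1)
            (Ideal.pow_mem_of_mem _ hx1 t ht1)
      have hM : (Ideal.span {Ideal.Quotient.mk (lamIdeal K s t) (X 0),
          Ideal.Quotient.mk (lamIdeal K s t) (X 1)}).IsMaximal := by
        have hmap : Ideal.span {Ideal.Quotient.mk (lamIdeal K s t) (X 0),
            Ideal.Quotient.mk (lamIdeal K s t) (X 1)}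
            = Ideal.map (Ideal.Quotient.mk (lamIdeal K s t)) (Ideal.span {X 0, X 1}) := by
          rw [Ideal.map_span, Set.image_insert_eq, Set.image_singleton]
        rw [hmap]
        rcases Ideal.map_eq_top_or_isMaximal_of_surjective (Ideal.Quotient.mk (lamIdeal K s t))
          Ideal.Quotient.mk_surjective spanX_maximal with htop | hmax
        · exfalso
          have h2 := congrArg (Ideal.comap (Ideal.Quotient.mk (lamIdeal K s t))) htop
          rw [Ideal.comap_top, Ideal.comap_map_of_surjective _ Ideal.Quotient.mk_surjective,
            ← RingHom.ker_eq_comap_bot, Ideal.mk_ker, sup_eq_left.mpr hker] at h2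
          exact spanX_maximal.ne_top h2
        · exact hmax
      exact sInf_le ⟨bot_le, hM⟩
    · apply Ideal.span_le.mpr
      intro q hq
      simp only [Set.mem_insert_iff, Set.mem_singleton_iff] at hq
      apply Ideal.radical_le_jacobson
      rw [← Ideal.zero_eq_bot]
      rcases hq with rfl | rfl
      · exact mem_nilradical.mpr ⟨s+1, by
          rw [← map_pow, Ideal.Quotient.eq_zero_iff_mem]; exact Xs1_mem ht1⟩
      · exact mem_nilradical.mpr ⟨t+1, by
          rw [← map_pow, Ideal.Quotient.eq_zero_iff_mem]; exact Yt1_mem hs1⟩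
  · -- X^s ≠ 0
    intro hzero
    rw [Ideal.Quotient.eq_zero_iff_mem] at hzero
    obtain ⟨-, -, hd⟩ := coeff_of_mem hs1 ht1 hzero
    rw [X_pow_eq_monomial, coeff_monomial, coeff_monomial, if_pos rfl,
      if_neg (sne_diff (a := s) (by omega))] at hd
    simpa using hd
  · -- socle
    ext x
    simp only [Set.mem_setOf_eq, Set.mem_range]
    constructor
    · intro hx
      obtain ⟨p, rfl⟩ := Ideal.Quotient.mk_surjective x
      have h0 : X 0 * p ∈ lamIdeal K s t := by
        have := hx _ (Ideal.subset_span (Set.mem_insert _ _))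
        rwa [← map_mul, Ideal.Quotient.eq_zero_iff_mem] at this
      have h1 : X 1 * p ∈ lamIdeal K s t := by
        have := hx _ (Ideal.subset_span (Set.mem_insert_of_mem _ rfl))
        rwa [← map_mul, Ideal.Quotient.eq_zero_iff_mem] at this
      obtain ⟨hA0, hB0, hd0⟩ := coeff_of_mem hs1 ht1 h0
      obtain ⟨hA1, hB1, hd1⟩ := coeff_of_mem hs1 ht1 h1
      have hcoeff0 : ∀ k : ℕ, coeff (Finsupp.single 0 (k+1)) (X 0 * p)
          = coeff (Finsupp.single 0 k) p := by
        intro k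
        rw [mul_comm, ← pow_one (X (0:Fin 2)), X_pow_eq_monomial, coeff_mul_monomial',
          if_pos (Finsupp.single_le_iff.mpr (by simp [Finsupp.single_apply]))]
        rw [mul_one, ← Finsupp.single_tsub]
        norm_num
      have hcoeff1 : ∀ k : ℕ, coeff (Finsupp.single 1 (k+1)) (X 1 * p)
          = coeff (Finsupp.single 1 k) p := by
        intro k
        rw [mul_comm, ← pow_one (X (1:Fin 2)), X_pow_eq_monomial, coeff_mul_monomial',
          if_pos (Finsupp.single_le_iff.mpr (by simp [Finsupp.single_apply]))]
        rw [mul_one, ← Finsupp.single_tsub]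
        norm_num
      have key0 : ∀ k, k < s → coeff (Finsupp.single 0 k) p = 0 := by
        intro k hk
        rcases Nat.lt_or_ge (k+1) s with h | h
        · rw [← hcoeff0 k]; exact hA0 _ h
        · have hks : k + 1 = s := by omega
          have h2 : coeff (Finsupp.single 1 t) (X 0 * p) = 0 := by
            rw [mul_comm, ← pow_one (X (0:Fin 2)), X_pow_eq_monomial, coeff_mul_monomial',
              if_neg (by rw [Finsupp.single_le_iff]; simp [Finsupp.single_apply])]
          rw [h2, add_zero] at hd0
          rw [← hcoeff0 k, hks]
          exact hd0
      have key1 : ∀ k, k < t → coeff (Finsupp.single 1 k) p = 0 := by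
        intro k hk
        rcases Nat.lt_or_ge (k+1) t with h | h
        · rw [← hcoeff1 k]; exact hB1 _ h
        · have hks : k + 1 = t := by omega
          have h2 : coeff (Finsupp.single 0 s) (X 1 * p) = 0 := by
            rw [mul_comm, ← pow_one (X (1:Fin 2)), X_pow_eq_monomial, coeff_mul_monomial',
              if_neg (by rw [Finsupp.single_le_iff]; simp [Finsupp.single_apply])]
          rw [h2, zero_add] at hd1
          rw [← hcoeff1 k, hks]
          exact hd1
      set a := coeff (Finsupp.single 0 s) p with ha
      set b := coeff (Finsupp.single 1 t) p with hb
      refine ⟨a + b, ?_⟩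
      show (a + b) • Ideal.Quotient.mk (lamIdeal K s t) (X (0:Fin 2) ^ s)
          = Ideal.Quotient.mk (lamIdeal K s t) p
      have hq : p - C (a+b) * X 0 ^ s + C b * (X 0 ^ s - X 1 ^ t) ∈ lamIdeal K s t := by
        apply mem_of_coeff hs1 ht1
        · intro i hi
          simp only [coeff_add, coeff_sub, coeff_C_mul, X_pow_eq_monomial, coeff_monomial]
          rcases eq_or_lt_of_le hi with rfl | hi'
          · rw [if_pos rfl, if_neg (Ne.symm (sne_diff (a := i) (b := t) (by omega)))]
            rw [← ha]
            ring
          · rw [if_neg (sne_same 0 (by omega)), if_neg (Ne.symm (sne_diff (a := i) (b := t) (by omega))),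
              key0 i hi']
            ring
        · intro j hj
          simp only [coeff_add, coeff_sub, coeff_C_mul, X_pow_eq_monomial, coeff_monomial]
          rcases eq_or_lt_of_le hj with rfl | hj'
          · rw [if_neg (sne_diff (a := s) (b := j) (by omega)), if_pos rfl]
            rw [← hb]
            ring
          · rw [if_neg (sne_diff' (a := s) (b := j) (by omega)), if_neg (sne_same 1 (by omega)),
              key1 j hj']
            ring
      have hq2 : p - C (a+b) * X 0 ^ s ∈ lamIdeal K s t := by
        have heq : p - C (a+b) * X 0 ^ s
            = (p - C (a+b) * X 0 ^ s + C b * (X 0 ^ s - X 1 ^ t))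
              - C b * (X 0 ^ s - X 1 ^ t) := by ring
        rw [heq]
        exact Ideal.sub_mem _ hq (Ideal.mul_mem_left _ _ g2_mem)
      have hmk : Ideal.Quotient.mk (lamIdeal K s t) p
          = Ideal.Quotient.mk (lamIdeal K s t) (C (a+b) * X 0 ^ s) := by
        rw [Ideal.Quotient.mk_eq_mk_iff_sub_mem]
        exact hq2
      rw [hmk, ← MvPolynomial.smul_eq_C_mul]
      exact (Submodule.Quotient.mk_smul (lamIdeal K s t) (a+b) (X (0:Fin 2) ^ s)).symm
    · rintro ⟨c, rfl⟩
      intro y hy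
      show y * (c • Ideal.Quotient.mk (lamIdeal K s t) (X (0:Fin 2) ^ s)) = 0
      rw [Ideal.mem_span_pair] at hy
      obtain ⟨u, v, rfl⟩ := hy
      have hz0 : Ideal.Quotient.mk (lamIdeal K s t) (X 0) *
          Ideal.Quotient.mk (lamIdeal K s t) (X (0:Fin 2) ^ s) = 0 := by
        rw [← map_mul, Ideal.Quotient.eq_zero_iff_mem, ← pow_succ']
        exact Xs1_mem ht1
      have hz1 : Ideal.Quotient.mk (lamIdeal K s t) (X 1) *
          Ideal.Quotient.mk (lamIdeal K s t) (X (0:Fin 2) ^ s) = 0 := by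
        rw [← map_mul, Ideal.Quotient.eq_zero_iff_mem]
        obtain ⟨s', rfl⟩ := Nat.exists_eq_add_of_le hs1
        have hh : (X 1 * X 0 ^ (1+s') : MvPolynomial (Fin 2) K)
            = X 0 ^ s' * (X 0 * X 1) := by ring
        rw [hh]
        exact Ideal.mul_mem_left _ _ g1_mem
      rw [mul_smul_comm, add_mul, mul_assoc, mul_assoc, hz0, hz1, mul_zero, mul_zero,
        add_zero, smul_zero]
end

section
/- Let K be a field and s, t ≥ 2. The K-algebra Λ = K[X,Y]/(XY, X^s − Y^t) is a symmetric algebra: the linear map f: Λ → K defined on the basis {1, X, …, X^s, Y, …, Y^{t−1}} by f(X^s) = 1 and f(b) = 0 for all other basis elements b, has kernel containing no nonzero ideal of Λ. -/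
open MvPolynomial

section Aux

variable (K : Type*) [Field K] (s t : ℕ)

private lemma mk_xy : Ideal.Quotient.mk (lamIdeal K s t) (X 0 * X 1) = 0 := by
  rw [Ideal.Quotient.eq_zero_iff_mem]
  exact Ideal.subset_span (by simp)

private lemma mk_st : Ideal.Quotient.mk (lamIdeal K s t) (X (0 : Fin 2) ^ s)
    = Ideal.Quotient.mk (lamIdeal K s t) (X 1 ^ t) := by
  rw [Ideal.Quotient.eq]
  exact Ideal.subset_span (by simp)

private lemma mk_mixed {a b : ℕ} (ha : 1 ≤ a) (hb : 1 ≤ b) :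
    Ideal.Quotient.mk (lamIdeal K s t) (X 0 ^ a * X 1 ^ b) = 0 := by
  obtain ⟨a, rfl⟩ := Nat.exists_eq_add_of_le ha
  obtain ⟨b, rfl⟩ := Nat.exists_eq_add_of_le hb
  have h : (X 0 ^ (1 + a) * X 1 ^ (1 + b) : MvPolynomial (Fin 2) K)
      = (X 0 * X 1) * (X 0 ^ a * X 1 ^ b) := by ring
  rw [h, map_mul, mk_xy, zero_mul]

private lemma mk_x_big (ht : 1 ≤ t) {k : ℕ} (hk : s < k) :
    Ideal.Quotient.mk (lamIdeal K s t) (X (0 : Fin 2) ^ k) = 0 := by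
  obtain ⟨m, rfl⟩ := Nat.exists_eq_add_of_lt hk
  rw [show (X (0:Fin 2) ^ (s + m + 1) : MvPolynomial (Fin 2) K)
      = X 0 ^ (m + 1) * X 0 ^ s by ring, map_mul, mk_st, ← map_mul]
  exact mk_mixed K s t (Nat.succ_le_succ (Nat.zero_le m)) ht

private lemma mk_y_big (hs : 1 ≤ s) {k : ℕ} (hk : t < k) :
    Ideal.Quotient.mk (lamIdeal K s t) (X (1 : Fin 2) ^ k) = 0 := by
  obtain ⟨m, rfl⟩ := Nat.exists_eq_add_of_lt hk
  rw [show (X (1:Fin 2) ^ (t + m + 1) : MvPolynomial (Fin 2) K)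
      = X 1 ^ t * X 1 ^ (m + 1) by ring, map_mul, ← mk_st, ← map_mul]
  exact mk_mixed K s t hs (Nat.succ_le_succ (Nat.zero_le m))

/-- The spanning family `1, x, …, x^s, 1, y, …, y^{t-1}` of `Λ`. -/
private noncomputable def lamBasis : Fin (s + 1) ⊕ Fin t → lam K s t :=
  Sum.elim (fun i => Ideal.Quotient.mk (lamIdeal K s t) (X 0 ^ (i : ℕ)))
    (fun j => Ideal.Quotient.mk (lamIdeal K s t) (X 1 ^ (j : ℕ)))

private lemma span_lamBasis (hs : 2 ≤ s) (ht : 2 ≤ t) :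
    Submodule.span K (Set.range (lamBasis K s t)) = ⊤ := by
  set S := Submodule.span K (Set.range (lamBasis K s t)) with hS
  have key : ∀ z ∈ S, ∀ n : Fin 2, z * Ideal.Quotient.mk (lamIdeal K s t) (X n) ∈ S := by
    intro z hz n
    induction hz using Submodule.span_induction with
    | mem x hx =>
      obtain ⟨k, rfl⟩ := hx
      fin_cases n
      · simp only [Fin.mk_zero]
        rcases k with i | j
        · simp only [lamBasis, Sum.elim_inl, ← map_mul, ← pow_succ]
          rcases lt_or_eq_of_le (Nat.lt_succ_iff.mp i.isLt) with h | h
          · exact Submodule.subset_span ⟨.inl ⟨(i : ℕ) + 1, by omega⟩, rfl⟩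
          · rw [mk_x_big K s t (by omega) (by omega)]
            exact S.zero_mem
        · rcases Nat.eq_zero_or_pos (j : ℕ) with h | h
          · simp only [lamBasis, Sum.elim_inr, h, pow_zero, map_one, one_mul]
            have : Ideal.Quotient.mk (lamIdeal K s t) (X (0:Fin 2))
                = lamBasis K s t (.inl ⟨1, by omega⟩) := by
              simp [lamBasis]
            rw [this]
            exact Submodule.subset_span ⟨_, rfl⟩
          · simp only [lamBasis, Sum.elim_inr, ← map_mul]
            rw [show (X 1 ^ (j : ℕ) * X 0 : MvPolynomial (Fin 2) K)
                = X 0 ^ 1 * X 1 ^ (j : ℕ) by ring, mk_mixed K s t le_rfl h]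
            exact S.zero_mem
      · simp only [Fin.mk_one]
        rcases k with i | j
        · rcases Nat.eq_zero_or_pos (i : ℕ) with h | h
          · simp only [lamBasis, Sum.elim_inl, h, pow_zero, map_one, one_mul]
            have : Ideal.Quotient.mk (lamIdeal K s t) (X (1:Fin 2))
                = lamBasis K s t (.inr ⟨1, by omega⟩) := by
              simp [lamBasis]
            rw [this]
            exact Submodule.subset_span ⟨_, rfl⟩
          · simp only [lamBasis, Sum.elim_inl, ← map_mul]
            rw [show (X 0 ^ (i : ℕ) * X 1 : MvPolynomial (Fin 2) K)
                = X 0 ^ (i : ℕ) * X 1 ^ 1 by ring, mk_mixed K s t h le_rfl]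
            exact S.zero_mem
        · simp only [lamBasis, Sum.elim_inr, ← map_mul, ← pow_succ]
          rcases lt_or_eq_of_le (by omega : (j : ℕ) + 1 ≤ t) with h | h
          · exact Submodule.subset_span ⟨.inr ⟨(j : ℕ) + 1, h⟩, rfl⟩
          · rw [h, ← mk_st]
            exact Submodule.subset_span ⟨.inl ⟨s, by omega⟩, rfl⟩
    | zero =>
      rw [zero_mul]; exact S.zero_mem
    | add x y _ _ hx hy =>
      rw [add_mul]; exact S.add_mem hx hy
    | smul a x _ hx =>
      rw [smul_mul_assoc]; exact S.smul_mem a hx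
  rw [eq_top_iff]
  rintro z -
  obtain ⟨p, rfl⟩ := Ideal.Quotient.mk_surjective z
  induction p using MvPolynomial.induction_on with
  | C a =>
    have h1 : Ideal.Quotient.mk (lamIdeal K s t) (C a)
        = a • lamBasis K s t (.inl 0) := by
      simp only [lamBasis, Sum.elim_inl, Fin.val_zero, pow_zero]
      rw [← Ideal.Quotient.mkₐ_eq_mk K, ← map_smul]
      congr 1
      rw [smul_eq_C_mul, mul_one]
    rw [h1]
    exact S.smul_mem a (Submodule.subset_span ⟨_, rfl⟩)
  | add p q hp hq =>
    rw [map_add]; exact S.add_mem hp hq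
  | mul_X p n hp =>
    rw [map_mul]; exact key _ hp n

end Aux

/-- `Λ = K[X,Y]/(XY, X^s - Y^t)` is a symmetric algebra: the linear form `f` defined on the
basis `{1, X, …, X^s, Y, …, Y^{t-1}}` by `f(X^s) = 1` and `f(b) = 0` for all other basis
elements has kernel containing no nonzero ideal of `Λ`. -/
theorem stmt4 (K : Type*) [Field K] (s t : ℕ) (hs : 2 ≤ s) (ht : 2 ≤ t)
    (f : lam K s t →ₗ[K] K)
    (hXs : f (Ideal.Quotient.mk (lamIdeal K s t) (X (0 : Fin 2) ^ s)) = 1)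
    (hXi : ∀ i : ℕ, i < s → f (Ideal.Quotient.mk (lamIdeal K s t) (X (0 : Fin 2) ^ i)) = 0)
    (hYj : ∀ j : ℕ, 1 ≤ j → j < t →
      f (Ideal.Quotient.mk (lamIdeal K s t) (X (1 : Fin 2) ^ j)) = 0) :
    ∀ I : Ideal (lam K s t), (∀ x ∈ I, f x = 0) → I = ⊥ := by
  intro I hI
  rw [eq_bot_iff]
  intro a ha
  rw [Ideal.mem_bot]
  -- values of f on powers
  have fx : ∀ n : ℕ, f (Ideal.Quotient.mk (lamIdeal K s t) (X (0 : Fin 2) ^ n))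
      = if n = s then 1 else 0 := by
    intro n
    rcases lt_trichotomy n s with h | h | h
    · rw [if_neg h.ne, hXi n h]
    · rw [if_pos h, h, hXs]
    · rw [if_neg h.ne', mk_x_big K s t (by omega) h, map_zero]
  have fy : ∀ n : ℕ, 1 ≤ n → f (Ideal.Quotient.mk (lamIdeal K s t) (X (1 : Fin 2) ^ n))
      = if n = t then 1 else 0 := by
    intro n hn
    rcases lt_trichotomy n t with h | h | h
    · rw [if_neg h.ne, hYj n hn h]
    · rw [if_pos h, h, ← mk_st, hXs]
    · rw [if_neg h.ne', mk_y_big K s t (by omega) h, map_zero]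
  -- write a as a combination of the spanning family
  have hmem : a ∈ Submodule.span K (Set.range (lamBasis K s t)) := by
    rw [span_lamBasis K s t hs ht]; trivial
  obtain ⟨c, hc⟩ := (Submodule.mem_span_range_iff_exists_fun K).mp hmem
  have key : ∀ μ : lam K s t,
      (∑ k : Fin (s + 1) ⊕ Fin t, c k • f (μ * lamBasis K s t k)) = 0 := by
    intro μ
    have h0 : f (μ * a) = 0 := hI _ (I.mul_mem_left μ ha)
    rw [← hc, Finset.mul_sum] at h0
    simp_rw [mul_smul_comm, map_sum, map_smul] at h0
    exact h0
  -- the coefficients of y, …, y^{t-1} vanish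
  have hd : ∀ j : Fin t, 1 ≤ (j : ℕ) → c (.inr j) = 0 := by
    intro j hj
    have hjt := j.isLt
    have h0 := key (Ideal.Quotient.mk (lamIdeal K s t) (X (1 : Fin 2) ^ (t - (j : ℕ))))
    rw [Fintype.sum_eq_single (Sum.inr j : Fin (s + 1) ⊕ Fin t) ?_] at h0
    · simp only [lamBasis, Sum.elim_inr, ← map_mul, ← pow_add] at h0
      rw [show t - (j : ℕ) + (j : ℕ) = t by omega, fy t (by omega), if_pos rfl,
        smul_eq_mul, mul_one] at h0
      exact h0
    · rintro (i | j') hb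
      · simp only [lamBasis, Sum.elim_inl]
        rcases Nat.eq_zero_or_pos (i : ℕ) with h | h
        · rw [h, pow_zero, map_one, mul_one, fy (t - (j : ℕ)) (by omega),
            if_neg (by omega), smul_zero]
        · rw [← map_mul, show (X 1 ^ (t - (j : ℕ)) * X 0 ^ (i : ℕ) : MvPolynomial (Fin 2) K)
            = X 0 ^ (i : ℕ) * X 1 ^ (t - (j : ℕ)) by ring,
            mk_mixed K s t h (by omega), map_zero, smul_zero]
      · have hne : (j' : ℕ) ≠ (j : ℕ) := fun h => hb (by rw [Fin.ext h])
        have hj't := j'.isLt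
        simp only [lamBasis, Sum.elim_inr, ← map_mul, ← pow_add]
        rcases lt_or_ge (t - (j : ℕ) + (j' : ℕ)) t with hlt | hge
        · rw [fy _ (by omega), if_neg (by omega), smul_zero]
        · rw [mk_y_big K s t (by omega) (by omega), map_zero, smul_zero]
  -- the coefficients of x, …, x^{s-1} vanish
  have hcmid : ∀ i : Fin (s + 1), 1 ≤ (i : ℕ) → (i : ℕ) < s → c (.inl i) = 0 := by
    intro i hi1 his
    have h0 := key (Ideal.Quotient.mk (lamIdeal K s t) (X (0 : Fin 2) ^ (s - (i : ℕ))))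
    rw [Fintype.sum_eq_single (Sum.inl i : Fin (s + 1) ⊕ Fin t) ?_] at h0
    · simp only [lamBasis, Sum.elim_inl, ← map_mul, ← pow_add] at h0
      rw [show s - (i : ℕ) + (i : ℕ) = s by omega, fx s, if_pos rfl,
        smul_eq_mul, mul_one] at h0
      exact h0
    · rintro (i' | j') hb
      · have hne : (i' : ℕ) ≠ (i : ℕ) := fun h => hb (by rw [Fin.ext h])
        have hi's := i'.isLt
        simp only [lamBasis, Sum.elim_inl, ← map_mul, ← pow_add]
        rw [fx _, if_neg (by omega), smul_zero]
      · simp only [lamBasis, Sum.elim_inr]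
        rcases Nat.eq_zero_or_pos (j' : ℕ) with h | h
        · rw [h, pow_zero, map_one, mul_one, fx (s - (i : ℕ)), if_neg (by omega), smul_zero]
        · rw [← map_mul, mk_mixed K s t (by omega) h, map_zero, smul_zero]
  -- the coefficient of x^s vanishes
  have hcs : ∀ i : Fin (s + 1), (i : ℕ) = s → c (.inl i) = 0 := by
    intro i his
    have h0 := key 1
    rw [Fintype.sum_eq_single (Sum.inl i : Fin (s + 1) ⊕ Fin t) ?_] at h0
    · simp only [lamBasis, Sum.elim_inl, one_mul] at h0
      rw [fx _, if_pos his, smul_eq_mul, mul_one] at h0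
      exact h0
    · rintro (i' | j') hb
      · have hne : (i' : ℕ) ≠ (i : ℕ) := fun h => hb (by rw [Fin.ext h])
        simp only [lamBasis, Sum.elim_inl, one_mul]
        rw [fx _, if_neg (by omega), smul_zero]
      · have hj't := j'.isLt
        simp only [lamBasis, Sum.elim_inr, one_mul]
        rcases Nat.eq_zero_or_pos (j' : ℕ) with h | h
        · rw [h, pow_zero, show ((1 : MvPolynomial (Fin 2) K)) = X (0 : Fin 2) ^ 0 by
            rw [pow_zero], fx 0, if_neg (by omega), smul_zero]
        · rw [fy _ h, if_neg (by omega), smul_zero]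
  -- the two constant coefficients sum to zero
  have ht0 : (0 : ℕ) < t := by omega
  have hval : (((⟨0, ht0⟩ : Fin t)) : ℕ) = 0 := rfl
  have hc0 : c (.inl 0) + c (.inr ⟨0, ht0⟩) = 0 := by
    have h0 := key (Ideal.Quotient.mk (lamIdeal K s t) (X (0 : Fin 2) ^ s))
    rw [Fintype.sum_sum_type] at h0
    rw [Finset.sum_eq_single_of_mem (0 : Fin (s + 1)) (Finset.mem_univ _) ?_,
      Finset.sum_eq_single_of_mem (⟨0, ht0⟩ : Fin t) (Finset.mem_univ _) ?_] at h0
    · simp only [lamBasis, Sum.elim_inl, Sum.elim_inr, Fin.val_zero, hval, pow_zero,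
        mul_one, ← map_mul, ← pow_add, Nat.add_zero] at h0
      rw [fx s, if_pos rfl, smul_eq_mul, mul_one, smul_eq_mul, mul_one] at h0
      exact h0
    · intro j' _ hj'
      have h : 1 ≤ (j' : ℕ) := by
        rcases Nat.eq_zero_or_pos (j' : ℕ) with h | h
        · exact absurd (Fin.ext h) hj'
        · exact h
      simp only [lamBasis, Sum.elim_inr, ← map_mul]
      rw [mk_mixed K s t (by omega) h, map_zero, smul_zero]
    · intro i' _ hi'
      have h : 1 ≤ (i' : ℕ) := by
        rcases Nat.eq_zero_or_pos (i' : ℕ) with h | h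
        · exact absurd (Fin.ext h) hi'
        · exact h
      simp only [lamBasis, Sum.elim_inl, ← map_mul, ← pow_add]
      rw [fx _, if_neg (by omega), smul_zero]
  -- conclude
  rw [← hc, Fintype.sum_sum_type,
    Finset.sum_eq_single_of_mem (0 : Fin (s + 1)) (Finset.mem_univ _) ?_,
    Finset.sum_eq_single_of_mem (⟨0, ht0⟩ : Fin t) (Finset.mem_univ _) ?_]
  · simp only [lamBasis, Sum.elim_inl, Sum.elim_inr, Fin.val_zero, hval, pow_zero]
    rw [← add_smul, hc0, zero_smul]
  · intro j' _ hj'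
    have h : 1 ≤ (j' : ℕ) := by
      rcases Nat.eq_zero_or_pos (j' : ℕ) with h | h
      · exact absurd (Fin.ext h) hj'
      · exact h
    rw [hd j' h, zero_smul]
  · intro i' _ hi'
    have h : 1 ≤ (i' : ℕ) := by
      rcases Nat.eq_zero_or_pos (i' : ℕ) with h | h
      · exact absurd (Fin.ext h) hi'
      · exact h
    rcases lt_or_eq_of_le (Nat.lt_succ_iff.mp i'.isLt) with hlt | heq
    · rw [hcmid i' h hlt, zero_smul]
    · rw [hcs i' heq, zero_smul]
end

section
/- Let u ≥ 0 and r ≥ 1 be integers, and let C be the (u+1)×(u+1) integer matrix whose (1,1) entry is 4r, whose remaining first-row and first-column entries are all 2r, and whose lower-right u×u block is I_u + r·J_u (identity plus r times the all-ones matrix). Then det C = 4r. -/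
/-- The determinant of the `(u+1) × (u+1)` integer matrix with `(1,1)` entry `4r`, remaining
first-row and first-column entries `2r`, and lower-right `u × u` block `I_u + r·J_u`,
is `4r`. -/
theorem stmt5 (u r : ℕ) (hr : 1 ≤ r) :
    Matrix.det (Matrix.of fun i j : Fin (u + 1) =>
      if (i : ℕ) = 0 then (if (j : ℕ) = 0 then 4 * (r : ℤ) else 2 * (r : ℤ))
      else if (j : ℕ) = 0 then 2 * (r : ℤ)
      else (if i = j then 1 else 0) + (r : ℤ)) = 4 * (r : ℤ) := by
  set A : Matrix (Fin (u + 1)) (Fin 2) ℤ := Matrix.of fun i k =>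
    if k = 0 then (if (i : ℕ) = 0 then 2 else 1) else (if (i : ℕ) = 0 then 1 else 0) with hA
  set B : Matrix (Fin 2) (Fin (u + 1)) ℤ := Matrix.of fun k j =>
    if k = 0 then (r : ℤ) * (if (j : ℕ) = 0 then 2 else 1)
    else (if (j : ℕ) = 0 then -1 else 0) with hB
  have h : (Matrix.of fun i j : Fin (u + 1) =>
      if (i : ℕ) = 0 then (if (j : ℕ) = 0 then 4 * (r : ℤ) else 2 * (r : ℤ))
      else if (j : ℕ) = 0 then 2 * (r : ℤ)
      else (if i = j then 1 else 0) + (r : ℤ)) = 1 + A * B := by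
    ext i j
    have hij : (i : ℕ) = 0 → (j : ℕ) = 0 → i = j := by
      intro hi hj; exact Fin.ext (by omega)
    simp only [Matrix.of_apply, Matrix.add_apply, Matrix.mul_apply, Fin.sum_univ_two,
      Matrix.one_apply, hA, hB]
    by_cases hi : (i : ℕ) = 0 <;> by_cases hj : (j : ℕ) = 0 <;>
      simp only [hi, hj, if_true, if_false]
    · rw [if_pos (hij hi hj)]; norm_num [show (1 : Fin 2) ≠ 0 by decide]; try ring
    · rw [if_neg (by intro h'; subst h'; exact hj hi)]
      norm_num [show (1 : Fin 2) ≠ 0 by decide]; try ring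
    · rw [if_neg (by intro h'; subst h'; exact hi hj)]
      norm_num [show (1 : Fin 2) ≠ 0 by decide]; try ring
    · norm_num [show (1 : Fin 2) ≠ 0 by decide]; try ring
  rw [h, Matrix.det_one_add_mul_comm]
  have hBA : (1 : Matrix (Fin 2) (Fin 2) ℤ) + B * A =
      !![1 + 4 * (r : ℤ) + u * r, 2 * r; -2, 0] := by
    ext k l
    fin_cases k <;> fin_cases l <;>
      simp only [Matrix.add_apply, Matrix.mul_apply, Matrix.one_apply, hA, hB,
        Matrix.of_apply, Fin.sum_univ_succ, Matrix.cons_val_zero, Matrix.cons_val_one,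
        Matrix.head_cons, Matrix.head_fin_const, Fin.val_succ, Fin.val_zero,
        if_true, if_false] <;>
      simp [Finset.sum_ite_eq', mul_comm] <;> ring
  rw [hBA, Matrix.det_fin_two_of]
  ring
end

section
/- Let p, q ≥ 1, s, t ≥ 1 be integers and set u = p+q−2. Let C be the (u+1)×(u+1) integer matrix with (1,1) entry s+t, first-row and first-column entries t in positions 2,…,p and s in positions p+1,…,p+q−1, a block I_{p−1} + t·J_{p−1} in rows/columns 2,…,p, a block I_{q−1} + s·J_{q−1} in rows/columns p+1,…,p+q−1, and zeros elsewhere. Then det C = s + t + (p+q−2)st. -/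
/-- The Cartan matrix of `Λ(p,q;s,t)`: the `(p+q-1) × (p+q-1)` integer matrix with `(1,1)` entry
`s+t`, first-row and first-column entries `t` in positions `2,…,p` and `s` in positions
`p+1,…,p+q-1`, diagonal blocks `I_{p-1} + t·J_{p-1}` and `I_{q-1} + s·J_{q-1}`, and zeros
elsewhere. -/
def cartanLam (p q s t : ℕ) : Matrix (Fin (p + q - 1)) (Fin (p + q - 1)) ℤ :=
  Matrix.of fun i j =>
    if (i : ℕ) = 0 then
      (if (j : ℕ) = 0 then (s : ℤ) + t else if (j : ℕ) < p then (t : ℤ) else (s : ℤ))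
    else if (j : ℕ) = 0 then (if (i : ℕ) < p then (t : ℤ) else (s : ℤ))
    else if (i : ℕ) < p ∧ (j : ℕ) < p then (if i = j then 1 else 0) + (t : ℤ)
    else if p ≤ (i : ℕ) ∧ p ≤ (j : ℕ) then (if i = j then 1 else 0) + (s : ℤ)
    else 0

private lemma det_one_add_const (m : ℕ) (c : ℚ) :
    Matrix.det ((1 : Matrix (Fin m) (Fin m) ℚ) + Matrix.of (fun _ _ => c)) = 1 + m * c := by
  have h : (Matrix.of (fun _ _ : Fin m => c) : Matrix (Fin m) (Fin m) ℚ)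
      = Matrix.replicateCol (Fin 1) (fun _ => c) * Matrix.replicateRow (Fin 1) (fun _ => (1:ℚ)) := by
    ext i j
    simp [Matrix.mul_apply]
  erw [h, Matrix.det_one_add_replicateCol_mul_replicateRow (ι := Fin 1)]
  simp [dotProduct, mul_comm]

private lemma detLamQ (m k s t : ℕ) :
    (((cartanLam (m+1) (k+1) s t).map (fun x : ℤ => (x : ℚ)))).det
      = (s : ℚ) + t + (m + k) * s * t := by
  have h1 : (1 : ℚ) + m * t ≠ 0 := by positivity
  have h2 : (1 : ℚ) + k * s ≠ 0 := by positivity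
  set M : Matrix (Fin ((m+1)+(k+1)-1)) (Fin ((m+1)+(k+1)-1)) ℚ :=
    (cartanLam (m+1) (k+1) s t).map (fun x : ℤ => (x : ℚ)) with hMdef
  let e : (Fin 1 ⊕ (Fin m ⊕ Fin k)) ≃ Fin ((m+1)+(k+1)-1) :=
    ((Equiv.refl (Fin 1)).sumCongr finSumFinEquiv).trans
      (finSumFinEquiv.trans (finCongr (by omega)))
  have e0 : ∀ x : Fin 1, ((e (Sum.inl x)) : ℕ) = 0 := by intro x; simp [e]
  have e1 : ∀ i : Fin m, ((e (Sum.inr (Sum.inl i))) : ℕ) = 1 + i := by intro i; simp [e]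
  have e2 : ∀ j : Fin k, ((e (Sum.inr (Sum.inr j))) : ℕ) = 1 + (m + j) := by intro j; simp [e]
  set A : Matrix (Fin 1) (Fin 1) ℚ := Matrix.of fun _ _ => (s : ℚ) + t with hA
  set B : Matrix (Fin 1) (Fin m ⊕ Fin k) ℚ :=
    Matrix.of fun _ j => Sum.elim (fun _ => (t:ℚ)) (fun _ => (s:ℚ)) j with hB
  set C : Matrix (Fin m ⊕ Fin k) (Fin 1) ℚ :=
    Matrix.of fun i _ => Sum.elim (fun _ => (t:ℚ)) (fun _ => (s:ℚ)) i with hC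
  set D : Matrix (Fin m ⊕ Fin k) (Fin m ⊕ Fin k) ℚ :=
    Matrix.fromBlocks (1 + Matrix.of fun _ _ => (t:ℚ)) 0 0
      (1 + Matrix.of fun _ _ => (s:ℚ)) with hD
  have hsub : M.submatrix e e = Matrix.fromBlocks A B C D := by
    ext i j
    rcases i with x | i | i <;> rcases j with y | j | j <;>
      simp only [Matrix.submatrix_apply, hMdef, Matrix.map_apply, cartanLam, Matrix.of_apply,
        Matrix.fromBlocks_apply₁₁, Matrix.fromBlocks_apply₁₂, Matrix.fromBlocks_apply₂₁,
        Matrix.fromBlocks_apply₂₂, Sum.elim_inl, Sum.elim_inr, hA, hB, hC, hD,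
        Matrix.add_apply, Matrix.one_apply, Matrix.zero_apply,
        EmbeddingLike.apply_eq_iff_eq, Sum.inr.injEq, Sum.inl.injEq, e0, e1, e2] <;>
      [(have hi := (0:ℕ).le_refl); (have hi := e1 j); (have hi := e2 j);
       (have hi := e1 i); skip; (have hi1 := e1 i; have hi2 := e2 j);
       (have hi := e2 i); (have hi1 := e2 i; have hi2 := e1 j); skip] <;>
      split_ifs <;> push_cast <;> first | omega | ring1 | simp_all
  rw [← Matrix.det_submatrix_equiv_self e M, hsub]
  set X : Matrix (Fin m ⊕ Fin k) (Fin 1) ℚ :=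
    Matrix.of fun i _ => Sum.elim (fun _ => -(t:ℚ)/(1+m*t)) (fun _ => -(s:ℚ)/(1+k*s)) i with hX
  have hdetU : (Matrix.fromBlocks (1 : Matrix (Fin 1) (Fin 1) ℚ) 0 X 1).det = 1 := by
    rw [Matrix.det_fromBlocks_zero₁₂]
    simp
  have hzero : C + D * X = 0 := by
    ext i j
    rcases i with i | i <;>
      simp [hC, hD, hX, Matrix.mul_apply, Fintype.sum_sum_type, Matrix.add_apply,
        Matrix.one_apply, add_mul, Finset.sum_add_distrib, Finset.sum_ite_eq,
        Finset.sum_const, Matrix.fromBlocks_apply₁₁, Matrix.fromBlocks_apply₁₂,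
        Matrix.fromBlocks_apply₂₁, Matrix.fromBlocks_apply₂₂] <;>
      field_simp <;> ring
  have key : (Matrix.fromBlocks A B C D).det
      = (Matrix.fromBlocks A B C D).det
        * (Matrix.fromBlocks (1 : Matrix (Fin 1) (Fin 1) ℚ) 0 X 1).det := by
    rw [hdetU, mul_one]
  rw [key, ← Matrix.det_mul, Matrix.fromBlocks_multiply]
  simp only [Matrix.mul_one, Matrix.mul_zero, Matrix.zero_mul, Matrix.one_mul, add_zero, zero_add]
  rw [hzero, Matrix.det_fromBlocks_zero₂₁, hD, Matrix.det_fromBlocks_zero₂₁,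
    det_one_add_const, det_one_add_const]
  have hBX : (A + B * X) = Matrix.of fun (_ _ : Fin 1) =>
      ((s : ℚ) + t) + (m * (t * (-(t:ℚ)/(1+m*t))) + k * (s * (-(s:ℚ)/(1+k*s)))) := by
    ext i j
    simp [hA, hB, hX, Matrix.mul_apply, Fintype.sum_sum_type, Finset.sum_const,
      Matrix.add_apply]
  rw [hBX, Matrix.det_fin_one, Matrix.of_apply]
  field_simp
  ring

/-- The determinant of the Cartan matrix of `Λ(p,q;s,t)` is `s + t + (p+q-2)st`. -/
theorem stmt6 (p q s t : ℕ) (hp : 1 ≤ p) (hq : 1 ≤ q) (hs : 1 ≤ s) (ht : 1 ≤ t) :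
    Matrix.det (cartanLam p q s t) = (s : ℤ) + t + ((p + q - 2 : ℕ) : ℤ) * s * t := by
  obtain ⟨m, rfl⟩ : ∃ m, p = m + 1 := ⟨p - 1, by omega⟩
  obtain ⟨k, rfl⟩ : ∃ k, q = k + 1 := ⟨q - 1, by omega⟩
  have h := detLamQ m k s t
  have h2 : (((cartanLam (m+1) (k+1) s t).det : ℤ) : ℚ)
      = (s : ℚ) + t + (m + k) * s * t := by
    have h4 := RingHom.map_det (Int.castRingHom ℚ) (cartanLam (m+1) (k+1) s t)
    simp only [Int.coe_castRingHom, RingHom.mapMatrix_apply] at h4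
    rw [h4]
    convert h using 2
  have h3 : m + 1 + (k + 1) - 2 = m + k := by omega
  rw [h3]
  exact_mod_cast h2
end

section
/- Let r ≥ 1, u ≥ 0, and let C be the (u+1)×(u+1) integer matrix with (1,1) entry 4r, remaining first-row and first-column entries 2r, and lower-right block I_u + r·J_u. If r·u is even then the Smith normal form of C is diag(1,…,1, 4r); if r·u is odd then the Smith normal form of C is diag(1,…,1, 2, 2r). -/
open Matrix Finset

/-- The Cartan matrix of `Γ(p,q;r)` with `u = p+q-2`: `(1,1)` entry `4r`, remaining border
entries `2r`, lower-right block `I_u + r·J_u`. -/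
def cartanGam (u r : ℕ) : Matrix (Fin (u + 1)) (Fin (u + 1)) ℤ :=
  Matrix.of fun i j =>
    if (i : ℕ) = 0 then (if (j : ℕ) = 0 then 4 * (r : ℤ) else 2 * (r : ℤ))
    else if (j : ℕ) = 0 then 2 * (r : ℤ)
    else (if i = j then 1 else 0) + (r : ℤ)

namespace SNFGam

def midx {v : ℕ} (k : Fin v) : Fin (v + 2) := k.succ.castSucc

@[simp] lemma midx_val {v : ℕ} (k : Fin v) : ((midx k : Fin (v+2)) : ℕ) = (k : ℕ) + 1 := rfl

@[simp] lemma fin_val_ne_self {v : ℕ} (k : Fin v) : ¬((k:ℕ) = v) := Nat.ne_of_lt k.isLt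
@[simp] lemma fin_val_ne_self' {v : ℕ} (k : Fin v) : ¬(v = (k:ℕ)) :=
  fun h => Nat.ne_of_lt k.isLt h.symm

@[simp] lemma midx_ne_last {v : ℕ} (k : Fin v) : ¬((k:ℕ) + 1 = v + 1) := by
  have := k.isLt; omega

@[simp] lemma midx_inj {v : ℕ} {a b : Fin v} : (midx a = midx b) ↔ a = b := by
  unfold midx; rw [Fin.castSucc_inj, Fin.succ_inj]

@[simp] lemma midx_ne_zero {v : ℕ} (k : Fin v) : midx k ≠ 0 := by simp [Fin.ext_iff]
@[simp] lemma zero_ne_midx {v : ℕ} (k : Fin v) : (0 : Fin (v+2)) ≠ midx k := by simp [Fin.ext_iff]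
@[simp] lemma midx_ne_lastf {v : ℕ} (k : Fin v) : midx k ≠ Fin.last (v+1) := by simp [Fin.ext_iff]
@[simp] lemma lastf_ne_midx {v : ℕ} (k : Fin v) : Fin.last (v+1) ≠ midx k := by simp [Fin.ext_iff]
@[simp] lemma lastf_ne_zero {v : ℕ} : Fin.last (v+1) ≠ (0 : Fin (v+2)) := by simp [Fin.ext_iff]
@[simp] lemma zero_ne_lastf {v : ℕ} : (0 : Fin (v+2)) ≠ Fin.last (v+1) := by simp [Fin.ext_iff]

lemma sum_split {v : ℕ} (f : Fin (v+2) → ℤ) :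
    ∑ k, f k = f 0 + (∑ k : Fin v, f (midx k)) + f (Fin.last (v+1)) := by
  rw [Fin.sum_univ_succ, Fin.sum_univ_castSucc]
  simp only [midx, Fin.succ_castSucc, Fin.succ_last]
  ring

lemma fin_cases3 {v : ℕ} (i : Fin (v+2)) :
    i = 0 ∨ (∃ k : Fin v, i = midx k) ∨ i = Fin.last (v+1) := by
  rcases Nat.lt_or_ge (i:ℕ) (v+1) with h | h
  · rcases Nat.eq_zero_or_pos (i:ℕ) with h0 | h0
    · exact Or.inl (Fin.ext h0)
    · refine Or.inr (Or.inl ⟨⟨(i:ℕ)-1, by omega⟩, ?_⟩)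
      apply Fin.ext; simp [midx]; omega
  · refine Or.inr (Or.inr (Fin.ext ?_)); have := i.isLt; simp; omega

/-- row-operation matrix -/
def Ue (v : ℕ) (r : ℤ) : Matrix (Fin (v+2)) (Fin (v+2)) ℤ :=
  Matrix.of fun i j =>
    if (i:ℕ) = 0 then (if (j:ℕ) = 0 then 1 else if (j:ℕ) = v+1 then 2*r*v else -(2*r))
    else if (i:ℕ) = v+1 then (if (j:ℕ) = 0 then 0 else if (j:ℕ) = v+1 then 1+r*v else -r)
    else (if (j:ℕ) = v+1 then -1 else if (i:ℕ) = (j:ℕ) then 1 else 0)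

/-- inverse of `Ue` -/
def Ue' (v : ℕ) (r : ℤ) : Matrix (Fin (v+2)) (Fin (v+2)) ℤ :=
  Matrix.of fun i j =>
    if (i:ℕ) = 0 then (if (j:ℕ) = 0 then 1 else if (j:ℕ) = v+1 then 0 else 2*r)
    else if (i:ℕ) = v+1 then (if (j:ℕ) = 0 then 0 else if (j:ℕ) = v+1 then 1 else r)
    else (if (j:ℕ) = 0 then 0 else if (j:ℕ) = v+1 then 1
          else (if (i:ℕ) = (j:ℕ) then 1 else 0) + r)

/-- column-operation matrix -/
def Ve (v : ℕ) : Matrix (Fin (v+2)) (Fin (v+2)) ℤ :=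
  Matrix.of fun i j =>
    if (j:ℕ) = v+1 ∧ ¬((i:ℕ) = 0) ∧ ¬((i:ℕ) = v+1) then 1
    else if (i:ℕ) = (j:ℕ) then 1 else 0

/-- inverse of `Ve` -/
def Ve' (v : ℕ) : Matrix (Fin (v+2)) (Fin (v+2)) ℤ :=
  Matrix.of fun i j =>
    if (j:ℕ) = v+1 ∧ ¬((i:ℕ) = 0) ∧ ¬((i:ℕ) = v+1) then -1
    else if (i:ℕ) = (j:ℕ) then 1 else 0

/-- intermediate result `Ue * C` -/
def Xm (v : ℕ) (r : ℤ) : Matrix (Fin (v+2)) (Fin (v+2)) ℤ :=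
  Matrix.of fun i j =>
    if (i:ℕ) = 0 then (if (j:ℕ) = 0 then 4*r else if (j:ℕ) = v+1 then 2*r*(v+1) else 0)
    else if (i:ℕ) = v+1 then (if (j:ℕ) = 0 then 2*r else if (j:ℕ) = v+1 then 1+r*(v+1) else 0)
    else (if (j:ℕ) = v+1 then -1 else if (i:ℕ) = (j:ℕ) then 1 else 0)

/-- embedding of a 2×2 matrix into the corners, identity in the middle -/
def emb (v : ℕ) (b : Matrix (Fin 2) (Fin 2) ℤ) : Matrix (Fin (v+2)) (Fin (v+2)) ℤ :=
  Matrix.of fun i j =>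
    if (i:ℕ) = 0 then (if (j:ℕ) = 0 then b 0 0 else if (j:ℕ) = v+1 then b 0 1 else 0)
    else if (i:ℕ) = v+1 then (if (j:ℕ) = 0 then b 1 0 else if (j:ℕ) = v+1 then b 1 1 else 0)
    else (if (j:ℕ) = v+1 then 0 else if (i:ℕ) = (j:ℕ) then 1 else 0)

def Bm (r w : ℤ) : Matrix (Fin 2) (Fin 2) ℤ := !![4*r, 2*r*w; 2*r, 1+r*w]

lemma UeC (v r : ℕ) : Ue v r * cartanGam (v+1) r = Xm v r := by
  ext i j
  rw [Matrix.mul_apply, sum_split]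
  rcases fin_cases3 i with rfl | ⟨a, rfl⟩ | rfl <;>
    rcases fin_cases3 j with rfl | ⟨b, rfl⟩ | rfl <;>
    simp [Ue, Xm, cartanGam, Fin.val_inj, Finset.sum_add_distrib,
      mul_add, add_mul, mul_ite, ite_mul, Finset.sum_ite_eq, Finset.sum_ite_eq',
      Finset.mul_sum] <;>
    push_cast <;> ring

lemma XmVe (v r : ℕ) : Xm v r * Ve v = emb v (Bm r (v+1)) := by
  ext i j
  rw [Matrix.mul_apply, sum_split]
  rcases fin_cases3 i with rfl | ⟨a, rfl⟩ | rfl <;>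
    rcases fin_cases3 j with rfl | ⟨b, rfl⟩ | rfl <;>
    simp [Xm, Ve, emb, Bm, Fin.val_inj, Finset.sum_add_distrib,
      mul_add, add_mul, mul_ite, ite_mul, Finset.sum_ite_eq, Finset.sum_ite_eq',
      Finset.mul_sum] <;>
    push_cast <;> ring

lemma UeUe' (v r : ℕ) : Ue v r * Ue' v r = 1 := by
  ext i j
  rw [Matrix.mul_apply, sum_split]
  rcases fin_cases3 i with rfl | ⟨a, rfl⟩ | rfl <;>
    rcases fin_cases3 j with rfl | ⟨b, rfl⟩ | rfl <;>
    simp [Ue, Ue', Matrix.one_apply, Fin.val_inj, Finset.sum_add_distrib,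
      mul_add, add_mul, mul_ite, ite_mul, Finset.sum_ite_eq, Finset.sum_ite_eq',
      Finset.mul_sum] <;>
    push_cast <;> ring

lemma VeVe' (v : ℕ) : Ve v * Ve' v = 1 := by
  ext i j
  rw [Matrix.mul_apply, sum_split]
  rcases fin_cases3 i with rfl | ⟨a, rfl⟩ | rfl <;>
    rcases fin_cases3 j with rfl | ⟨b, rfl⟩ | rfl <;>
    simp [Ve, Ve', Matrix.one_apply, Fin.val_inj, Finset.sum_add_distrib,
      mul_add, add_mul, mul_ite, ite_mul, Finset.sum_ite_eq, Finset.sum_ite_eq',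
      Finset.mul_sum] <;>
    push_cast <;> ring

lemma emb_mul (v : ℕ) (a b : Matrix (Fin 2) (Fin 2) ℤ) :
    emb v a * emb v b = emb v (a * b) := by
  ext i j
  rw [Matrix.mul_apply, sum_split]
  rcases fin_cases3 i with rfl | ⟨a', rfl⟩ | rfl <;>
    rcases fin_cases3 j with rfl | ⟨b', rfl⟩ | rfl <;>
    simp [emb, Matrix.mul_apply, Fin.sum_univ_two, Fin.val_inj, Finset.sum_add_distrib,
      mul_add, add_mul, mul_ite, ite_mul, Finset.sum_ite_eq, Finset.sum_ite_eq',
      Finset.mul_sum]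

lemma emb_one (v : ℕ) : emb v 1 = 1 := by
  ext i j
  rcases fin_cases3 i with rfl | ⟨a', rfl⟩ | rfl <;>
    rcases fin_cases3 j with rfl | ⟨b', rfl⟩ | rfl <;>
    simp [emb, Matrix.one_apply, Fin.val_inj]

lemma emb_diag (v : ℕ) (a d : ℤ) :
    emb v !![a,0;0,d] =
      Matrix.diagonal (fun i : Fin (v+2) =>
        if (i:ℕ) = v+1 then d else if (i:ℕ) = 0 then a else 1) := by
  ext i j
  rcases fin_cases3 i with rfl | ⟨a', rfl⟩ | rfl <;>
    rcases fin_cases3 j with rfl | ⟨b', rfl⟩ | rfl <;>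
    simp [emb, Matrix.diagonal, Fin.val_inj, Matrix.one_apply]

/-! ### 2×2 matrices -/

def UBe (m : ℤ) : Matrix (Fin 2) (Fin 2) ℤ := !![m, 1-2*m; 2*m+1, -(4*m)]
def UBe' (m : ℤ) : Matrix (Fin 2) (Fin 2) ℤ := !![4*m, 1-2*m; 2*m+1, -m]
def VBe (r : ℤ) : Matrix (Fin 2) (Fin 2) ℤ := !![0,1;1,-(2*r)]
def VBe' (r : ℤ) : Matrix (Fin 2) (Fin 2) ℤ := !![2*r,1;1,0]
def UBo (m : ℤ) : Matrix (Fin 2) (Fin 2) ℤ := !![-1,2; m+1, -(2*m+1)]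
def UBo' (m : ℤ) : Matrix (Fin 2) (Fin 2) ℤ := !![2*m+1, 2; m+1, 1]
def VBo : Matrix (Fin 2) (Fin 2) ℤ := !![0,1;1,0]

lemma Bm_eq (r w : ℤ) : Bm r w = !![4*r, 2*(r*w); 2*r, 1+(r*w)] := by
  ext i j; fin_cases i <;> fin_cases j <;> simp [Bm] <;> ring

lemma evenB (r w m : ℤ) (h : r*w = 2*m) :
    UBe m * Bm r w * VBe r = !![1,0;0,4*r] := by
  rw [Bm_eq, h]
  ext i j
  fin_cases i <;> fin_cases j <;>
    simp [UBe, VBe, Matrix.mul_apply, Fin.sum_univ_two] <;> ring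

lemma oddB (r w m : ℤ) (h : r*w = 2*m+1) :
    UBo m * Bm r w * VBo = !![2,0;0,2*r] := by
  rw [Bm_eq, h]
  ext i j
  fin_cases i <;> fin_cases j <;>
    simp [UBo, VBo, Matrix.mul_apply, Fin.sum_univ_two] <;> ring

lemma UBeUBe' (m : ℤ) : UBe m * UBe' m = 1 := by
  ext i j
  fin_cases i <;> fin_cases j <;>
    simp [UBe, UBe', Matrix.mul_apply, Fin.sum_univ_two, Matrix.one_apply] <;> ring

lemma VBeVBe' (r : ℤ) : VBe r * VBe' r = 1 := by
  ext i j
  fin_cases i <;> fin_cases j <;>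
    simp [VBe, VBe', Matrix.mul_apply, Fin.sum_univ_two, Matrix.one_apply] <;> ring

lemma UBoUBo' (m : ℤ) : UBo m * UBo' m = 1 := by
  ext i j
  fin_cases i <;> fin_cases j <;>
    simp [UBo, UBo', Matrix.mul_apply, Fin.sum_univ_two, Matrix.one_apply] <;> ring

lemma VBoVBo : VBo * VBo = 1 := by
  ext i j
  fin_cases i <;> fin_cases j <;>
    simp [VBo, Matrix.mul_apply, Fin.sum_univ_two, Matrix.one_apply]

/-! ### permutation -/

def swp (v : ℕ) : Equiv.Perm (Fin (v+2)) := Equiv.swap 0 ⟨v, by omega⟩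

def Pm (v : ℕ) : Matrix (Fin (v+2)) (Fin (v+2)) ℤ := (swp v).toPEquiv.toMatrix

lemma PmPm (v : ℕ) : Pm v * Pm v = 1 := by
  rw [Pm, ← PEquiv.toMatrix_trans, ← Equiv.toPEquiv_trans]
  have : (swp v).trans (swp v) = Equiv.refl _ := by
    ext x; simp [swp, Equiv.swap_apply_self]
  rw [this, Equiv.toPEquiv_refl, PEquiv.toMatrix_refl]

lemma Pm_diag (v : ℕ) (d : Fin (v+2) → ℤ) :
    Pm v * Matrix.diagonal d * Pm v = Matrix.diagonal (fun i => d (swp v i)) := by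
  have hsymm : Equiv.symm (swp v) = swp v := by rw [swp, Equiv.symm_swap]
  rw [Pm, PEquiv.toMatrix_toPEquiv_mul, PEquiv.mul_toMatrix_toPEquiv, Matrix.submatrix_submatrix,
    hsymm]
  show ((Matrix.diagonal d).submatrix (⇑(swp v) ∘ id) (id ∘ ⇑(swp v))) = _
  rw [Function.comp_id, Function.id_comp]
  exact Matrix.submatrix_diagonal d _ (swp v).injective

/-! ### helpers -/

lemma isUnit_det_of_mul_eq_one {n : ℕ} (A B : Matrix (Fin n) (Fin n) ℤ) (h : A * B = 1) :
    IsUnit A.det :=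
  IsUnit.of_mul_eq_one B.det (by rw [← Matrix.det_mul, h, Matrix.det_one])

lemma sandwich {n : ℕ} (E1 U C V E2 B : Matrix (Fin n) (Fin n) ℤ) (h : U * C * V = B) :
    (E1 * U) * C * (V * E2) = E1 * B * E2 := by
  rw [← h]; simp only [Matrix.mul_assoc]

end SNFGam

open SNFGam

/-- If `r·u` is even the Smith normal form of the Cartan matrix of `Γ` is `diag(1,…,1,4r)`;
if `r·u` is odd it is `diag(1,…,1,2,2r)`. -/
theorem stmt7 (u r : ℕ) (hr : 1 ≤ r) :
    (Even (r * u) →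
      ∃ U V : Matrix (Fin (u + 1)) (Fin (u + 1)) ℤ, IsUnit U.det ∧ IsUnit V.det ∧
        U * cartanGam u r * V =
          Matrix.diagonal (fun i : Fin (u + 1) => if (i : ℕ) = u then 4 * (r : ℤ) else 1)) ∧
    (Odd (r * u) →
      ∃ U V : Matrix (Fin (u + 1)) (Fin (u + 1)) ℤ, IsUnit U.det ∧ IsUnit V.det ∧
        U * cartanGam u r * V =
          Matrix.diagonal (fun i : Fin (u + 1) =>
            if (i : ℕ) = u then 2 * (r : ℤ) else if (i : ℕ) = u - 1 then 2 else 1)) := by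
  cases u with
  | zero =>
    constructor
    · intro _
      refine ⟨1, 1, by simp, by simp, ?_⟩
      rw [Matrix.one_mul, Matrix.mul_one]
      ext i j
      fin_cases i <;> fin_cases j <;>
        simp [cartanGam, Matrix.diagonal]
    · intro h
      simp at h
  | succ v =>
    have hUC : Ue v r * cartanGam (v+1) r * Ve v = emb v (Bm r (v+1)) := by
      rw [UeC, XmVe]
    constructor
    · -- even case
      intro hEven
      obtain ⟨m, hm⟩ := hEven
      have hm' : (r:ℤ) * ((v:ℤ)+1) = 2*(m:ℤ) := by
        have := congrArg (Nat.cast : ℕ → ℤ) hm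
        push_cast at this; linarith
      refine ⟨emb v (UBe m) * Ue v r, Ve v * emb v (VBe r), ?_, ?_, ?_⟩
      · apply isUnit_det_of_mul_eq_one _ (Ue' v r * emb v (UBe' m))
        calc emb v (UBe m) * Ue v r * (Ue' v r * emb v (UBe' m))
            = emb v (UBe m) * (Ue v r * Ue' v r) * emb v (UBe' m) := by
              simp only [Matrix.mul_assoc]
          _ = 1 := by rw [UeUe', Matrix.mul_one, emb_mul, UBeUBe', emb_one]
      · apply isUnit_det_of_mul_eq_one _ (emb v (VBe' r) * Ve' v)
        calc Ve v * emb v (VBe r) * (emb v (VBe' r) * Ve' v)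
            = Ve v * (emb v (VBe r) * emb v (VBe' r)) * Ve' v := by
              simp only [Matrix.mul_assoc]
          _ = 1 := by rw [emb_mul, VBeVBe', emb_one, Matrix.mul_one, VeVe']
      · rw [sandwich _ _ _ _ _ _ hUC, emb_mul, emb_mul, evenB (r:ℤ) ((v:ℤ)+1) m hm', emb_diag]
        congr 1
        funext i
        by_cases h : (i:ℕ) = v+1 <;> simp [h]
    · -- odd case
      intro hOdd
      obtain ⟨m, hm⟩ := hOdd
      have hm' : (r:ℤ) * ((v:ℤ)+1) = 2*(m:ℤ)+1 := by
        have := congrArg (Nat.cast : ℕ → ℤ) hm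
        push_cast at this; linarith
      refine ⟨Pm v * (emb v (UBo m) * Ue v r), (Ve v * emb v VBo) * Pm v, ?_, ?_, ?_⟩
      · apply isUnit_det_of_mul_eq_one _ ((Ue' v r * emb v (UBo' m)) * Pm v)
        calc Pm v * (emb v (UBo m) * Ue v r) * (Ue' v r * emb v (UBo' m) * Pm v)
            = Pm v * (emb v (UBo m) * (Ue v r * Ue' v r) * emb v (UBo' m)) * Pm v := by
              simp only [Matrix.mul_assoc]
          _ = 1 := by
              rw [UeUe', Matrix.mul_one, emb_mul, UBoUBo', emb_one, Matrix.mul_one, PmPm]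
      · apply isUnit_det_of_mul_eq_one _ (Pm v * (emb v VBo * Ve' v))
        calc Ve v * emb v VBo * Pm v * (Pm v * (emb v VBo * Ve' v))
            = Ve v * (emb v VBo * (Pm v * (Pm v * (emb v VBo * Ve' v)))) := by
              simp only [Matrix.mul_assoc]
          _ = 1 := by
              rw [← Matrix.mul_assoc (Pm v) (Pm v), PmPm, Matrix.one_mul,
                ← Matrix.mul_assoc (emb v VBo), emb_mul, VBoVBo, emb_one, Matrix.one_mul, VeVe']
      · have : (Pm v * (emb v (UBo m) * Ue v r)) * cartanGam (v+1) r * ((Ve v * emb v VBo) * Pm v)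
            = Pm v * ((emb v (UBo m) * Ue v r) * cartanGam (v+1) r * ((Ve v * emb v VBo))) * Pm v := by
          simp only [Matrix.mul_assoc]
        rw [this, sandwich _ _ _ _ _ _ hUC, emb_mul, emb_mul, oddB (r:ℤ) ((v:ℤ)+1) m hm',
          emb_diag, Pm_diag]
        refine congrArg Matrix.diagonal ?_
        funext i
        have hval : ((swp v i : Fin (v+2)) : ℕ)
            = if (i:ℕ) = 0 then v else if (i:ℕ) = v then 0 else (i:ℕ) := by
          by_cases h0 : i = (0 : Fin (v+2))
          · subst h0
            simp [swp, Equiv.swap_apply_left]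
          · by_cases hv : i = (⟨v, by omega⟩ : Fin (v+2))
            · subst hv
              have h0' : ¬((v:ℕ) = 0) := fun h => h0 (Fin.ext h)
              simp [swp, Equiv.swap_apply_right, h0']
            · have h0' : ¬((i:ℕ) = 0) := fun h => h0 (Fin.ext h)
              have hv' : ¬((i:ℕ) = v) := fun h => hv (Fin.ext h)
              simp [swp, Equiv.swap_apply_of_ne_of_ne h0 hv, h0', hv']
        have hi := i.isLt
        by_cases h0 : (i:ℕ) = 0
        · rw [hval]
          rcases Nat.eq_zero_or_pos v with hvz | hvz
          · simp [h0, hvz]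
          · simp [h0, hvz.ne', hvz.ne]
        · by_cases hv : (i:ℕ) = v
          · rw [hval]
            have hvz : v ≠ 0 := by omega
            simp [h0, hv, hvz, Ne.symm hvz]
          · rw [hval]
            simp [h0, hv]
end

section
/- Let p, q, s, t ≥ 1 and let C be the Cartan matrix of Λ(p,q;s,t) (size (p+q−1) with (1,1) entry s+t, border entries t and s, and diagonal blocks I_{p−1}+t·J_{p−1} and I_{q−1}+s·J_{q−1}). Then the Smith normal form of C is diag(1, 1, …, 1, s+t+(p+q−2)st). -/
namespace SNF8

open Finset

variable (p q s t : ℕ)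

def chZ : Fin (p + q - 1) → ℤ := fun i => if (i : ℕ) = 0 then 1 else 0
def chA : Fin (p + q - 1) → ℤ := fun i => if 0 < (i : ℕ) ∧ (i : ℕ) < p then 1 else 0
def chB : Fin (p + q - 1) → ℤ := fun i => if p ≤ (i : ℕ) then 1 else 0

def o (u v : Fin (p + q - 1) → ℤ) : Matrix (Fin (p + q - 1)) (Fin (p + q - 1)) ℤ :=
  Matrix.of fun i j => u i * v j

lemma o_mul_o (u v x y : Fin (p + q - 1) → ℤ) :
    o p q u v * o p q x y = (∑ k, v k * x k) • o p q u y := by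
  ext i j
  simp only [o, Matrix.mul_apply, Matrix.smul_apply, Matrix.of_apply, smul_eq_mul,
    Finset.sum_mul]
  exact Finset.sum_congr rfl fun k _ => by ring

section dots
variable (hp : 1 ≤ p) (hq : 1 ≤ q)
include hp hq

lemma ddZZ : (∑ k, chZ p q k * chZ p q k) = 1 := by
  rw [Finset.sum_congr rfl (fun (k : Fin (p+q-1)) _ =>
    show chZ p q k * chZ p q k = if (k:ℕ) = 0 then (1:ℤ) else 0 by
      unfold chZ; split_ifs <;> ring)]
  rw [Fin.sum_univ_eq_sum_range (fun k => if k = 0 then (1:ℤ) else 0), Finset.sum_boole]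
  have h2 : (Finset.range (p + q - 1)).filter (fun i => i = 0) = {0} := by
    ext k; simp; split_ifs <;> simp <;> omega
  rw [h2]; simp

lemma ddAA : (∑ k, chA p q k * chA p q k) = ((p - 1 : ℕ) : ℤ) := by
  rw [Finset.sum_congr rfl (fun (k : Fin (p+q-1)) _ =>
    show chA p q k * chA p q k = if 0 < (k:ℕ) ∧ (k:ℕ) < p then (1:ℤ) else 0 by
      unfold chA; split_ifs <;> ring)]
  rw [Fin.sum_univ_eq_sum_range (fun k => if 0 < k ∧ k < p then (1:ℤ) else 0),
    Finset.sum_boole]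
  have h2 : (Finset.range (p + q - 1)).filter (fun i => 0 < i ∧ i < p) = Finset.Ico 1 p := by
    ext k; simp; omega
  rw [h2, Nat.card_Ico]

lemma ddBB : (∑ k, chB p q k * chB p q k) = ((q - 1 : ℕ) : ℤ) := by
  rw [Finset.sum_congr rfl (fun (k : Fin (p+q-1)) _ =>
    show chB p q k * chB p q k = if p ≤ (k:ℕ) then (1:ℤ) else 0 by
      unfold chB; split_ifs <;> ring)]
  rw [Fin.sum_univ_eq_sum_range (fun k => if p ≤ k then (1:ℤ) else 0), Finset.sum_boole]
  have h2 : (Finset.range (p + q - 1)).filter (fun i => p ≤ i) = Finset.Ico p (p + q - 1) := by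
    ext k; simp; omega
  rw [h2, Nat.card_Ico]
  congr 1; omega

lemma ddZA : (∑ k, chZ p q k * chA p q k) = 0 :=
  Finset.sum_eq_zero fun k _ => by
    unfold chZ chA; split_ifs <;> first | ring1 | (exfalso; omega)
lemma ddAZ : (∑ k, chA p q k * chZ p q k) = 0 :=
  Finset.sum_eq_zero fun k _ => by
    unfold chZ chA; split_ifs <;> first | ring1 | (exfalso; omega)
lemma ddZB : (∑ k, chZ p q k * chB p q k) = 0 :=
  Finset.sum_eq_zero fun k _ => by
    unfold chZ chB; split_ifs <;> first | ring1 | (exfalso; omega)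
lemma ddBZ : (∑ k, chB p q k * chZ p q k) = 0 :=
  Finset.sum_eq_zero fun k _ => by
    unfold chZ chB; split_ifs <;> first | ring1 | (exfalso; omega)
lemma ddAB : (∑ k, chA p q k * chB p q k) = 0 :=
  Finset.sum_eq_zero fun k _ => by
    unfold chA chB; split_ifs <;> first | ring1 | (exfalso; omega)
lemma ddBA : (∑ k, chB p q k * chA p q k) = 0 :=
  Finset.sum_eq_zero fun k _ => by
    unfold chA chB; split_ifs <;> first | ring1 | (exfalso; omega)

end dots

def dd : ℤ := (s : ℤ) + t + ((p - 1 : ℕ) : ℤ) * s * t + ((q - 1 : ℕ) : ℤ) * s * t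

def UU : Matrix (Fin (p + q - 1)) (Fin (p + q - 1)) ℤ :=
  1 + (((p - 1 : ℕ) : ℤ) * t) • o p q (chZ p q) (chZ p q)
    + (-(t : ℤ)) • o p q (chZ p q) (chA p q)
    + (t : ℤ) • o p q (chZ p q) (chB p q)
    + (-1 : ℤ) • o p q (chA p q) (chZ p q)

def UUi : Matrix (Fin (p + q - 1)) (Fin (p + q - 1)) ℤ :=
  1 + (t : ℤ) • o p q (chZ p q) (chA p q)
    + (-(t : ℤ)) • o p q (chZ p q) (chB p q)
    + (1 : ℤ) • o p q (chA p q) (chZ p q)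
    + (t : ℤ) • o p q (chA p q) (chA p q)
    + (-(t : ℤ)) • o p q (chA p q) (chB p q)

set_option maxHeartbeats 2000000 in
lemma hUUi (hp : 1 ≤ p) (hq : 1 ≤ q) : UU p q t * UUi p q t = 1 := by
  simp only [UU, UUi, add_mul, mul_add, one_mul, mul_one, smul_mul_assoc, mul_smul_comm,
    o_mul_o, ddZZ p q hp hq, ddZA p q hp hq, ddAZ p q hp hq, ddZB p q hp hq,
    ddBZ p q hp hq, ddAB p q hp hq, ddBA p q hp hq, ddAA p q hp hq, ddBB p q hp hq,
    smul_smul, zero_smul, one_smul, smul_zero, add_zero, zero_add]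
  ext i j
  simp only [Matrix.add_apply, Matrix.smul_apply, Matrix.one_apply, o, Matrix.of_apply,
    chZ, chA, chB, smul_eq_mul, Fin.ext_iff]
  split_ifs <;> first | ring1 | (exfalso; omega)

def VV : Matrix (Fin (p + q - 1)) (Fin (p + q - 1)) ℤ :=
  1 + (((q - 1 : ℕ) : ℤ) * s) • o p q (chZ p q) (chZ p q)
    + (-1 : ℤ) • o p q (chZ p q) (chB p q)
    + (s : ℤ) • o p q (chA p q) (chZ p q)
    + (-(s : ℤ)) • o p q (chB p q) (chZ p q)

def VVi : Matrix (Fin (p + q - 1)) (Fin (p + q - 1)) ℤ :=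
  1 + (1 : ℤ) • o p q (chZ p q) (chB p q)
    + (-(s : ℤ)) • o p q (chA p q) (chZ p q)
    + (-(s : ℤ)) • o p q (chA p q) (chB p q)
    + (s : ℤ) • o p q (chB p q) (chZ p q)
    + (s : ℤ) • o p q (chB p q) (chB p q)

def CC : Matrix (Fin (p + q - 1)) (Fin (p + q - 1)) ℤ :=
  1 + ((s : ℤ) + t - 1) • o p q (chZ p q) (chZ p q)
    + (t : ℤ) • o p q (chZ p q) (chA p q)
    + (t : ℤ) • o p q (chA p q) (chZ p q)
    + (t : ℤ) • o p q (chA p q) (chA p q)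
    + (s : ℤ) • o p q (chZ p q) (chB p q)
    + (s : ℤ) • o p q (chB p q) (chZ p q)
    + (s : ℤ) • o p q (chB p q) (chB p q)

set_option maxHeartbeats 2000000 in
lemma hVVi (hp : 1 ≤ p) (hq : 1 ≤ q) : VV p q s * VVi p q s = 1 := by
  simp only [VV, VVi, add_mul, mul_add, one_mul, mul_one, smul_mul_assoc, mul_smul_comm,
    o_mul_o, ddZZ p q hp hq, ddZA p q hp hq, ddAZ p q hp hq, ddZB p q hp hq,
    ddBZ p q hp hq, ddAB p q hp hq, ddBA p q hp hq, ddAA p q hp hq, ddBB p q hp hq,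
    smul_smul, zero_smul, one_smul, smul_zero, add_zero, zero_add]
  ext i j
  simp only [Matrix.add_apply, Matrix.smul_apply, Matrix.one_apply, o, Matrix.of_apply,
    chZ, chA, chB, smul_eq_mul, Fin.ext_iff]
  split_ifs <;> first | ring1 | (exfalso; omega)

set_option maxHeartbeats 4000000 in
lemma hUCV (hp : 1 ≤ p) (hq : 1 ≤ q) : UU p q t * CC p q s t * VV p q s
    = 1 + (dd p q s t - 1) • o p q (chZ p q) (chZ p q) := by
  simp only [UU, CC, VV, dd, add_mul, mul_add, one_mul, mul_one, smul_mul_assoc, mul_smul_comm,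
    o_mul_o, ddZZ p q hp hq, ddZA p q hp hq, ddAZ p q hp hq, ddZB p q hp hq,
    ddBZ p q hp hq, ddAB p q hp hq, ddBA p q hp hq, ddAA p q hp hq, ddBB p q hp hq,
    smul_smul, zero_smul, one_smul, smul_zero, add_zero, zero_add]
  ext i j
  simp only [Matrix.add_apply, Matrix.smul_apply, Matrix.one_apply, o, Matrix.of_apply,
    chZ, chA, chB, smul_eq_mul, Fin.ext_iff]
  split_ifs <;> first | ring1 | (exfalso; omega)

set_option maxHeartbeats 1000000 in
lemma hC (hp : 1 ≤ p) (hq : 1 ≤ q) : CC p q s t = cartanLam p q s t := by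
  ext i j
  simp only [CC, cartanLam, Matrix.add_apply, Matrix.smul_apply, Matrix.one_apply, o,
    Matrix.of_apply, chZ, chA, chB, smul_eq_mul, Fin.ext_iff]
  split_ifs <;> first | ring1 | (exfalso; omega)

end SNF8

set_option maxHeartbeats 1000000 in
/-- The Smith normal form of the Cartan matrix of `Λ(p,q;s,t)` is
`diag(1, …, 1, s+t+(p+q-2)st)`. -/
theorem stmt8 (p q s t : ℕ) (hp : 1 ≤ p) (hq : 1 ≤ q) (hs : 1 ≤ s) (ht : 1 ≤ t) :
    ∃ U V : Matrix (Fin (p + q - 1)) (Fin (p + q - 1)) ℤ, IsUnit U.det ∧ IsUnit V.det ∧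
      U * cartanLam p q s t * V =
        Matrix.diagonal (fun i : Fin (p + q - 1) =>
          if (i : ℕ) = p + q - 2 then (s : ℤ) + t + ((p + q - 2 : ℕ) : ℤ) * s * t else 1) := by
  classical
  have hn2 : p + q - 2 < p + q - 1 := by omega
  set Z : Fin (p+q-1) := ⟨0, by omega⟩ with hZ
  set L : Fin (p+q-1) := ⟨p+q-2, hn2⟩ with hL
  set σ : Equiv.Perm (Fin (p+q-1)) := Equiv.swap Z L with hσ
  have sub1 : ∀ X Y : Matrix (Fin (p+q-1)) (Fin (p+q-1)) ℤ,
      X.submatrix σ id * Y = (X*Y).submatrix σ id := by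
    intro X Y; ext i j; simp [Matrix.mul_apply]
  have sub2 : ∀ X Y : Matrix (Fin (p+q-1)) (Fin (p+q-1)) ℤ,
      X.submatrix σ id * Y.submatrix id σ = (X*Y).submatrix σ σ := by
    intro X Y; ext i j; simp [Matrix.mul_apply]
  have sub3 : ∀ X Y : Matrix (Fin (p+q-1)) (Fin (p+q-1)) ℤ,
      X.submatrix id σ * Y.submatrix σ id = X*Y := by
    intro X Y; ext i j
    simp only [Matrix.mul_apply, Matrix.submatrix_apply, id]
    exact Equiv.sum_comp σ (fun k => X i k * Y k j)
  have sone : (1 : Matrix (Fin (p+q-1)) (Fin (p+q-1)) ℤ).submatrix σ σ = 1 := by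
    ext i j; simp [Matrix.one_apply, Matrix.submatrix_apply, σ.injective.eq_iff]
  refine ⟨(SNF8.UU p q t).submatrix σ id, (SNF8.VV p q s).submatrix id σ, ?_, ?_, ?_⟩
  · have h1 : (SNF8.UU p q t).submatrix σ id * (SNF8.UUi p q t).submatrix id σ = 1 := by
      rw [sub2, SNF8.hUUi p q t hp hq, sone]
    have h2 := congrArg Matrix.det h1
    rw [Matrix.det_mul, Matrix.det_one] at h2
    exact IsUnit.of_mul_eq_one _ h2
  · have h1 : (SNF8.VV p q s).submatrix id σ * (SNF8.VVi p q s).submatrix σ id = 1 := by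
      rw [sub3, SNF8.hVVi p q s hp hq]
    have h2 := congrArg Matrix.det h1
    rw [Matrix.det_mul, Matrix.det_one] at h2
    exact IsUnit.of_mul_eq_one _ h2
  · rw [← SNF8.hC p q s t hp hq, sub1, sub2, SNF8.hUCV p q s t hp hq]
    have hdd : SNF8.dd p q s t = (s:ℤ) + t + ((p+q-2:ℕ):ℤ) * s * t := by
      have hcast : ((p-1:ℕ):ℤ) + ((q-1:ℕ):ℤ) = ((p+q-2:ℕ):ℤ) := by omega
      unfold SNF8.dd; linear_combination ((s:ℤ) * t) * hcast
    have hvZ : (Z : ℕ) = 0 := rfl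
    have hvL : (L : ℕ) = p + q - 2 := rfl
    have h0 : ∀ k : Fin (p+q-1), ((σ k : ℕ) = 0) ↔ ((k:ℕ) = p + q - 2) := by
      intro k
      by_cases hk : k = Z
      · rw [hk, hσ, Equiv.swap_apply_left, hvL, hvZ]
        omega
      · by_cases hk2 : k = L
        · rw [hk2, hσ, Equiv.swap_apply_right, hvZ, hvL]
          simp
        · rw [hσ, Equiv.swap_apply_of_ne_of_ne hk hk2]
          constructor
          · intro h; exact absurd (Fin.ext (by rw [h, hvZ])) hk
          · intro h; exact absurd (Fin.ext (by rw [h, hvL])) hk2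
    have hinj : ∀ i j : Fin (p+q-1), (σ i = σ j) ↔ i = j := fun i j => σ.injective.eq_iff
    ext i j
    simp only [Matrix.submatrix_apply, Matrix.add_apply, Matrix.smul_apply, Matrix.one_apply,
      SNF8.o, SNF8.chZ, Matrix.of_apply, smul_eq_mul, Matrix.diagonal_apply, hdd,
      hinj i j, h0 i, h0 j, Fin.ext_iff]
    split_ifs <;> first | ring1 | (exfalso; omega)
end

section
/- Let A be an indecomposable finite-dimensional symmetric K-algebra given as KQ/I with I admissible, such that A is special biserial and A is not isomorphic to K[X]/(X²). Then for every arrow a of Q there exists a unique arrow a' with a'a ≠ 0 in A, and a unique arrow a'' with a·a'' ≠ 0 in A. -/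
namespace Stmt17Aux

variable {A : Type*} [Ring A]

/-- left-handed powers of an ideal -/
def jpow (J : Ideal A) : ℕ → Ideal A
  | 0 => J
  | (k+1) => Submodule.span A {z : A | ∃ j ∈ J, ∃ x ∈ jpow J k, z = j * x}

theorem jpow_succ (J : Ideal A) (k : ℕ) :
    jpow J (k+1) = Submodule.span A {z : A | ∃ j ∈ J, ∃ x ∈ jpow J k, z = j * x} := rfl

theorem mul_mem_jpowL {J : Ideal A} {j x : A} (hj : j ∈ J) {k : ℕ} (hx : x ∈ jpow J k) :
    j * x ∈ jpow J (k+1) :=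
  Submodule.subset_span ⟨j, hj, x, hx, rfl⟩

theorem jpow_succ_le (J : Ideal A) (k : ℕ) : jpow J (k+1) ≤ jpow J k := by
  rw [jpow_succ]
  refine Submodule.span_le.2 ?_
  rintro z ⟨j, hj, x, hx, rfl⟩
  exact Ideal.mul_mem_left _ j hx

theorem jpow_le (J : Ideal A) : ∀ k, jpow J k ≤ J
  | 0 => le_rfl
  | (k+1) => by
    rw [jpow_succ]
    refine Submodule.span_le.2 ?_
    rintro z ⟨j, hj, x, hx, rfl⟩
    exact Ideal.mul_mem_left _ j (jpow_le J k hx)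

theorem mul_mem_jpowR {J : Ideal A} (hJr : ∀ {x y : A}, x ∈ J → x * y ∈ J) :
    ∀ {k : ℕ} {x j : A}, x ∈ jpow J k → j ∈ J → x * j ∈ jpow J (k+1) := by
  intro k
  induction k with
  | zero => intro x j hx hj; exact Submodule.subset_span ⟨x, hx, j, hj, rfl⟩
  | succ k ih =>
    intro x j hx hj
    induction hx using Submodule.span_induction with
    | mem z hz =>
      obtain ⟨j', hj', y, hy, rfl⟩ := hz
      rw [mul_assoc]
      exact mul_mem_jpowL hj' (ih hy hj)
    | zero => simpa using (jpow J (k+1+1)).zero_mem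
    | add x y hx hy hx' hy' => rw [add_mul]; exact add_mem hx' hy'
    | smul a x hx hx' =>
      rw [smul_eq_mul, mul_assoc]
      exact Ideal.mul_mem_left _ a hx'

theorem exists_min {Q : ℕ → Prop} (h0 : ¬ Q 0) {n : ℕ} (hn : Q n) : ∃ k, ¬ Q k ∧ Q (k+1) := by
  induction n with
  | zero => exact absurd hn h0
  | succ n ih =>
    by_cases h : Q n
    · exact ih h
    · exact ⟨n, h, hn⟩

theorem exists_stab {g : ℕ → ℕ} (hg : ∀ m, g (m+1) ≤ g m) : ∃ m, g (m+1) = g m := by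
  by_contra h
  push_neg at h
  have hlt : ∀ m, g (m+1) < g m := fun m => lt_of_le_of_ne (hg m) (h m)
  have key : ∀ m, g m + m ≤ g 0 := by
    intro m
    induction m with
    | zero => simp
    | succ m ih => have := hlt m; omega
  have := key (g 0 + 1); omega

theorem nakayama {J N : Ideal A}
    (hu : ∀ x ∈ J, ∃ z : A, z * (1 - x) = 1)
    (hJr : ∀ {x y : A}, x ∈ J → x * y ∈ J)
    (hle : N ≤ Submodule.span A {z : A | ∃ j ∈ J, ∃ x ∈ N, z = j * x}) :
    ∀ s : Finset A, ↑s ⊆ (N : Set A) → N ≤ Submodule.span A (↑s : Set A) → N = ⊥ := by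
  intro s
  induction s using Finset.strongInduction with
  | _ s ih =>
    intro hsN hNs
    classical
    rcases Finset.eq_empty_or_nonempty s with rfl | ⟨x₁, hx₁⟩
    · refine le_bot_iff.1 ?_
      simpa using hNs
    · -- the submodule of elements representable with coefficients in J
      set W : Submodule A A :=
        { carrier := {w : A | ∃ b : A → A, (∀ y, b y ∈ J) ∧ w = ∑ y ∈ s, b y * y}
          add_mem' := by
            rintro w₁ w₂ ⟨b₁, hb₁, rfl⟩ ⟨b₂, hb₂, rfl⟩
            refine ⟨b₁ + b₂, fun y => add_mem (hb₁ y) (hb₂ y), ?_⟩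
            rw [← Finset.sum_add_distrib]
            simp [add_mul]
          zero_mem' := ⟨0, fun y => J.zero_mem, by simp⟩
          smul_mem' := by
            rintro a w ⟨b, hb, rfl⟩
            refine ⟨fun y => a * b y, fun y => Ideal.mul_mem_left _ a (hb y), ?_⟩
            rw [smul_eq_mul, Finset.mul_sum]
            simp [mul_assoc] } with hW
      have hNW : N ≤ W := by
        refine le_trans hle (Submodule.span_le.2 ?_)
        rintro z ⟨j, hj, x, hx, rfl⟩
        obtain ⟨c, -, hc⟩ := Submodule.mem_span_finset.1 (hNs hx)
        refine ⟨fun y => j * c y, fun y => hJr hj, ?_⟩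
        rw [← hc, Finset.mul_sum]
        refine Finset.sum_congr rfl fun y _ => ?_
        rw [smul_eq_mul, mul_assoc]
      obtain ⟨b, hbJ, hrep⟩ := hNW (hsN hx₁)
      obtain ⟨z, hz⟩ := hu (b x₁) (hbJ x₁)
      set t : Finset A := s.erase x₁ with ht
      have h1 : x₁ - b x₁ * x₁ = ∑ y ∈ t, b y * y := by
        have h := Finset.add_sum_erase s (fun y => b y * y) hx₁
        rw [← hrep] at h
        exact sub_eq_iff_eq_add'.2 h.symm
      have hx₁' : x₁ ∈ Submodule.span A (↑t : Set A) := by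
        have h2 : x₁ = z * ∑ y ∈ t, b y * y := by
          calc x₁ = 1 * x₁ := (one_mul _).symm
          _ = (z * (1 - b x₁)) * x₁ := by rw [hz]
          _ = z * (x₁ - b x₁ * x₁) := by rw [mul_assoc, sub_mul, one_mul]
          _ = _ := by rw [h1]
        rw [h2, Finset.mul_sum]
        refine Submodule.sum_mem _ fun y hy => ?_
        have h3 : z * (b y * y) = (z * b y) • y := by rw [smul_eq_mul, mul_assoc]
        rw [h3]
        exact Submodule.smul_mem _ _ (Submodule.subset_span (Finset.mem_coe.2 hy))
      have hspan' : N ≤ Submodule.span A (↑t : Set A) := by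
        refine le_trans hNs (Submodule.span_le.2 ?_)
        intro y hy
        rcases eq_or_ne y x₁ with rfl | hne
        · exact hx₁'
        · refine Submodule.subset_span ?_
          rw [ht]
          simp only [Finset.coe_erase, Set.mem_diff, Set.mem_singleton_iff]
          exact ⟨hy, hne⟩
      exact ih t (ht ▸ Finset.erase_ssubset hx₁)
        (fun y hy => hsN (Finset.mem_coe.2 (Finset.mem_of_mem_erase (Finset.mem_coe.1 hy))))
        hspan'

end Stmt17Aux
/-- Let `A = KQ/I` be an indecomposable finite-dimensional symmetric special biserial
`K`-algebra, not isomorphic to `K[X]/(X²)`. The presentation is encoded by a complete family of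
orthogonal nonzero idempotents `e v` (one for each vertex) and arrow elements `X a` with
`e (src a) * X a * e (tgt a) = X a`, generating `A`, the arrows lying in the Jacobson radical,
linearly independent modulo its square and generating it together with its square
(admissibility of `I`). Special biserial: at most two arrows start and end at each vertex, and
each arrow composes nontrivially with at most one arrow on each side. Then for every arrow `a`
there is a unique arrow `a'` with `X a' * X a ≠ 0` and a unique arrow `a''` with
`X a * X a'' ≠ 0`. -/
theorem stmt17 (K A : Type*) [Field K] [Ring A] [Algebra K A] [FiniteDimensional K A]
    (V E : Type*) [Fintype V] [Fintype E] [DecidableEq V] [DecidableEq E]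
    (src tgt : E → V) (e : V → A) (X : E → A)
    -- complete set of orthogonal nonzero idempotents
    (horth : ∀ v w, e v * e w = if v = w then e v else 0)
    (hne : ∀ v, e v ≠ 0)
    (hsum : (∑ v, e v) = 1)
    -- arrows
    (harr : ∀ a, e (src a) * X a = X a ∧ X a * e (tgt a) = X a)
    -- A is generated by the vertices and arrows (A = KQ/I)
    (hgen : Algebra.adjoin K (Set.range e ∪ Set.range X) = ⊤)
    -- admissibility of I: the arrows lie in the radical, are linearly independent modulo the
    -- square of the radical, and generate the radical together with its square
    (hrad : ∀ a, X a ∈ Ideal.jacobson (⊥ : Ideal A))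
    (hadm : ∀ c : E → K,
      (∑ a, c a • X a) ∈ Submodule.span K {z : A | ∃ x ∈ Ideal.jacobson (⊥ : Ideal A),
        ∃ y ∈ Ideal.jacobson (⊥ : Ideal A), z = x * y} → c = 0)
    (hradgen : Submodule.span K (Set.range X) ⊔
        Submodule.span K {z : A | ∃ x ∈ Ideal.jacobson (⊥ : Ideal A),
          ∃ y ∈ Ideal.jacobson (⊥ : Ideal A), z = x * y} =
      Submodule.restrictScalars K (Ideal.jacobson (⊥ : Ideal A)))
    -- special biserial
    (hout : ∀ v, (Finset.univ.filter fun a => src a = v).card ≤ 2)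
    (hin : ∀ v, (Finset.univ.filter fun a => tgt a = v).card ≤ 2)
    (huniqR : ∀ a b c : E, X a * X b ≠ 0 → X a * X c ≠ 0 → b = c)
    (huniqL : ∀ a b c : E, X b * X a ≠ 0 → X c * X a ≠ 0 → b = c)
    -- A is symmetric
    (f : A →ₗ[K] K) (hfsym : ∀ x y : A, f (x * y) = f (y * x))
    (hfL : ∀ x : A, (∀ y, f (y * x) = 0) → x = 0)
    (hfR : ∀ x : A, (∀ y, f (x * y) = 0) → x = 0)
    -- A is indecomposable (no nontrivial central idempotents)
    (hind : ∀ z : A, z ∈ Set.center A → z * z = z → z = 0 ∨ z = 1)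
    -- A is not isomorphic to K[X]/(X²)
    (hnot : ¬ Nonempty (A ≃ₐ[K]
      (Polynomial K ⧸ Ideal.span {(Polynomial.X : Polynomial K) ^ 2}))) :
    ∀ a : E, (∃! a' : E, X a' * X a ≠ 0) ∧ (∃! a'' : E, X a * X a'' ≠ 0) := by
  classical
  set J : Ideal A := Ideal.jacobson (⊥ : Ideal A) with hJdef
  -- J is a two-sided ideal
  have hJr : ∀ {x y : A}, x ∈ J → x * y ∈ J := by
    intro x y hx
    exact Ideal.mul_mem_right _ _ hx
  -- elements of J are left quasi-regular
  have hunit : ∀ x ∈ J, ∃ z : A, z * (1 - x) = 1 := by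
    intro x hx
    obtain ⟨z, hz⟩ := Ideal.mem_jacobson_iff.mp hx (-1)
    refine ⟨z, ?_⟩
    have hz' : z * -1 * x + z - 1 = 0 := by simpa [Ideal.mem_bot] using hz
    have hz'' : z * -1 * x + z = 1 := by
      have := sub_eq_zero.mp hz'
      exact this
    have hzz : z * (1 - x) = z * -1 * x + z := by noncomm_ring
    rw [hzz, hz'']
  -- the arrows are nonzero
  have hXne : ∀ b : E, X b ≠ 0 := by
    intro b hb0
    have h := hadm (fun x => if x = b then 1 else 0) ?_
    · have := congrFun h b
      simp at this
    · have hs : (∑ x, (if x = b then (1:K) else 0) • X x) = X b := by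
        simp only [ite_smul, one_smul, zero_smul, Finset.sum_ite_eq', Finset.mem_univ, if_true]
      rw [hs, hb0]
      exact Submodule.zero_mem _
  -- nilpotency of J
  obtain ⟨n, hnil⟩ : ∃ n, Stmt17Aux.jpow J n = ⊥ := by
    obtain ⟨m, hm⟩ := Stmt17Aux.exists_stab
      (g := fun k => Module.finrank K (Submodule.restrictScalars K (Stmt17Aux.jpow J k)))
      (fun m => Submodule.finrank_mono (fun x hx => Stmt17Aux.jpow_succ_le J m hx))
    have hstab : Stmt17Aux.jpow J (m+1) = Stmt17Aux.jpow J m :=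
      Submodule.restrictScalars_injective K _ _
        (Submodule.eq_of_le_of_finrank_le (fun x hx => Stmt17Aux.jpow_succ_le J m hx)
          (le_of_eq hm.symm))
    obtain ⟨s, hs⟩ := IsNoetherian.noetherian (Submodule.restrictScalars K (Stmt17Aux.jpow J m))
    have hsub : ↑s ⊆ (Stmt17Aux.jpow J m : Set A) := by
      intro x hx
      have h1 : x ∈ Submodule.span K (↑s : Set A) := Submodule.subset_span hx
      rw [hs] at h1
      exact h1
    have hsp : Stmt17Aux.jpow J m ≤ Submodule.span A (↑s : Set A) := by
      intro x hx
      have h1 : x ∈ Submodule.span K (↑s : Set A) := by rw [hs]; exact hx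
      exact Submodule.span_le_restrictScalars K A (↑s : Set A) h1
    exact ⟨m, Stmt17Aux.nakayama hunit hJr hstab.ge s hsub hsp⟩
  -- the span of the idempotents
  have h1mem : (1:A) ∈ Submodule.span K (Set.range e) := by
    rw [← hsum]
    exact Submodule.sum_mem _ (fun w _ => Submodule.subset_span ⟨w, rfl⟩)
  have hSemul : ∀ x ∈ Submodule.span K (Set.range e), ∀ y ∈ Submodule.span K (Set.range e),
      x * y ∈ Submodule.span K (Set.range e) := by
    intro x hx y hy
    obtain ⟨c, hc⟩ := (Submodule.mem_span_range_iff_exists_fun K).1 hx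
    obtain ⟨d, hd⟩ := (Submodule.mem_span_range_iff_exists_fun K).1 hy
    rw [← hc, ← hd, Finset.sum_mul]
    refine Submodule.sum_mem _ fun w _ => ?_
    rw [Finset.mul_sum]
    refine Submodule.sum_mem _ fun u _ => ?_
    rw [smul_mul_smul_comm]
    refine Submodule.smul_mem _ _ ?_
    rw [horth]
    split_ifs
    · exact Submodule.subset_span ⟨w, rfl⟩
    · exact Submodule.zero_mem _
  -- every element decomposes as semisimple part plus radical part
  have hBtop : ∀ y : A, y ∈ Submodule.span K (Set.range e) ⊔ Submodule.restrictScalars K J := by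
    intro y
    have hy : y ∈ Algebra.adjoin K (Set.range e ∪ Set.range X) := by rw [hgen]; trivial
    induction hy using Algebra.adjoin_induction with
    | mem x hx =>
      rcases hx with ⟨w, rfl⟩ | ⟨b, rfl⟩
      · exact Submodule.mem_sup_left (Submodule.subset_span ⟨w, rfl⟩)
      · exact Submodule.mem_sup_right (hrad b)
    | algebraMap r =>
      rw [Algebra.algebraMap_eq_smul_one]
      exact Submodule.mem_sup_left (Submodule.smul_mem _ _ h1mem)
    | add x y hx hy hx' hy' => exact add_mem hx' hy'
    | mul x y hx hy hx' hy' =>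
      obtain ⟨sx, hsx, jx, hjx, rfl⟩ := Submodule.mem_sup.1 hx'
      obtain ⟨sy, hsy, jy, hjy, rfl⟩ := Submodule.mem_sup.1 hy'
      have h1 : (sx + jx) * (sy + jy) = sx * sy + (sx * jy + (jx * sy + jx * jy)) := by
        noncomm_ring
      rw [h1]
      refine add_mem (Submodule.mem_sup_left (hSemul _ hsx _ hsy)) (Submodule.mem_sup_right ?_)
      exact add_mem (Ideal.mul_mem_left _ _ hjy) (add_mem (hJr hjx) (Ideal.mul_mem_left _ _ hjy))
  have hdecomp : ∀ y : A, ∃ (c : V → K) (j : A), j ∈ J ∧ y = (∑ w, c w • e w) + j := by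
    intro y
    obtain ⟨sy, hsy, j, hj, hyj⟩ := Submodule.mem_sup.1 (hBtop y)
    obtain ⟨c, hc⟩ := (Submodule.mem_span_range_iff_exists_fun K).1 hsy
    exact ⟨c, j, hj, by rw [hc, hyj]⟩
  -- multiplication rules with idempotents
  have hmul_sum_e : ∀ (c : V → K) (w : V), (∑ u, c u • e u) * e w = c w • e w := by
    intro c w
    rw [Finset.sum_mul]
    have h1 : ∀ u, (c u • e u) * e w = if u = w then c u • e u else 0 := by
      intro u
      rw [smul_mul_assoc, horth]
      split_ifs <;> simp
    rw [Finset.sum_congr rfl (fun u _ => h1 u), Finset.sum_ite_eq' Finset.univ w (fun u => c u • e u)]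
    simp
  have he_sum : ∀ (c : V → K) (w : V), e w * (∑ u, c u • e u) = c w • e w := by
    intro c w
    rw [Finset.mul_sum]
    have h1 : ∀ u, e w * (c u • e u) = if w = u then c u • e u else 0 := by
      intro u
      rw [mul_smul_comm, horth]
      split_ifs with h <;> simp [h]
    rw [Finset.sum_congr rfl (fun u _ => h1 u), Finset.sum_ite_eq Finset.univ w (fun u => c u • e u)]
    simp
  have hXe : ∀ (b : E) (w : V), X b * e w = if tgt b = w then X b else 0 := by
    intro b w
    conv_lhs => rw [← (harr b).2]
    rw [mul_assoc, horth]
    split_ifs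
    · rw [(harr b).2]
    · rw [mul_zero]
  have heX : ∀ (b : E) (w : V), e w * X b = if w = src b then X b else 0 := by
    intro b w
    conv_lhs => rw [← (harr b).1]
    rw [← mul_assoc, horth]
    split_ifs with h
    · rw [h, (harr b).1]
    · rw [zero_mul]
  -- flipping annihilation across f
  have hflipRL : ∀ s : A, (∀ j ∈ J, s * j = 0) → ∀ j ∈ J, j * s = 0 := by
    intro s hs j hj
    apply hfL
    intro y
    rw [← mul_assoc, hfsym, hs (y * j) (Ideal.mul_mem_left _ y hj), map_zero]
  have hflipLR : ∀ s : A, (∀ j ∈ J, j * s = 0) → ∀ j ∈ J, s * j = 0 := by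
    intro s hs j hj
    apply hfR
    intro y
    rw [mul_assoc, hfsym, hs (j * y) (hJr hj), map_zero]
  -- annihilation of the radical from annihilation of arrows
  have hannR : ∀ a : E, (∀ b, X a * X b = 0) → ∀ j ∈ J, X a * j = 0 := by
    intro a hco
    have key : ∀ k, ∀ j ∈ J, X a * j ∈ Stmt17Aux.jpow J k := by
      intro k
      induction k with
      | zero => exact fun j hj => Ideal.mul_mem_left _ _ hj
      | succ k ih =>
        intro j hj
        have hj' : j ∈ Submodule.span K (Set.range X) ⊔
            Submodule.span K {z : A | ∃ x ∈ J, ∃ y ∈ J, z = x * y} := by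
          rw [hradgen]; exact hj
        obtain ⟨p, hp, q, hq, rfl⟩ := Submodule.mem_sup.1 hj'
        clear hj hj'
        rw [mul_add]
        refine add_mem ?_ ?_
        · obtain ⟨c, hc⟩ := (Submodule.mem_span_range_iff_exists_fun K).1 hp
          rw [← hc, Finset.mul_sum]
          have h1 : ∀ b, X a * (c b • X b) = 0 := fun b => by
            rw [mul_smul_comm, hco b, smul_zero]
          rw [Finset.sum_congr rfl (fun b _ => h1 b)]
          simp
        · induction hq using Submodule.span_induction with
          | mem z hz =>
            obtain ⟨x, hx, y, hy, rfl⟩ := hz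
            rw [← mul_assoc]
            exact Stmt17Aux.mul_mem_jpowR hJr (ih x hx) hy
          | zero => rw [mul_zero]; exact zero_mem _
          | add u w hu hw hu' hw' => rw [mul_add]; exact add_mem hu' hw'
          | smul r u hu hu' =>
            rw [mul_smul_comm, Algebra.smul_def]
            exact Ideal.mul_mem_left _ _ hu'
    intro j hj
    have := key n j hj
    rw [hnil] at this
    simpa using this
  have hannL : ∀ a : E, (∀ b, X b * X a = 0) → ∀ j ∈ J, j * X a = 0 := by
    intro a hco
    have key : ∀ k, ∀ j ∈ J, j * X a ∈ Stmt17Aux.jpow J k := by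
      intro k
      induction k with
      | zero => exact fun j hj => hJr hj
      | succ k ih =>
        intro j hj
        have hj' : j ∈ Submodule.span K (Set.range X) ⊔
            Submodule.span K {z : A | ∃ x ∈ J, ∃ y ∈ J, z = x * y} := by
          rw [hradgen]; exact hj
        obtain ⟨p, hp, q, hq, rfl⟩ := Submodule.mem_sup.1 hj'
        clear hj hj'
        rw [add_mul]
        refine add_mem ?_ ?_
        · obtain ⟨c, hc⟩ := (Submodule.mem_span_range_iff_exists_fun K).1 hp
          rw [← hc, Finset.sum_mul]
          have h1 : ∀ b, (c b • X b) * X a = 0 := fun b => by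
            rw [smul_mul_assoc, hco b, smul_zero]
          rw [Finset.sum_congr rfl (fun b _ => h1 b)]
          simp
        · induction hq using Submodule.span_induction with
          | mem z hz =>
            obtain ⟨x, hx, y, hy, rfl⟩ := hz
            rw [mul_assoc]
            exact Stmt17Aux.mul_mem_jpowL hx (ih y hy)
          | zero => rw [zero_mul]; exact zero_mem _
          | add u w hu hw hu' hw' => rw [add_mul]; exact add_mem hu' hw'
          | smul r u hu hu' =>
            rw [smul_mul_assoc, Algebra.smul_def]
            exact Ideal.mul_mem_left _ _ hu'
    intro j hj
    have := key n j hj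
    rw [hnil] at this
    simpa using this
  -- the core contradiction
  have hcore : ∀ a : E, (∀ j ∈ J, X a * j = 0) → (∀ j ∈ J, j * X a = 0) → False := by
    intro a h1 h2
    have hXa0 : X a ≠ 0 := hXne a
    have hXaA : ∀ y : A, ∃ c : K, X a * y = c • X a := by
      intro y
      obtain ⟨c, j, hj, rfl⟩ := hdecomp y
      refine ⟨c (tgt a), ?_⟩
      rw [mul_add, h1 j hj, add_zero, Finset.mul_sum]
      have h3 : ∀ w, X a * (c w • e w) = if tgt a = w then c w • X a else 0 := by
        intro w
        rw [mul_smul_comm, hXe a w]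
        split_ifs <;> simp
      rw [Finset.sum_congr rfl (fun w _ => h3 w),
        Finset.sum_ite_eq Finset.univ (tgt a) (fun w => c w • X a)]
      simp
    have hAXa : ∀ y : A, ∃ c : K, y * X a = c • X a := by
      intro y
      obtain ⟨c, j, hj, rfl⟩ := hdecomp y
      refine ⟨c (src a), ?_⟩
      rw [add_mul, h2 j hj, add_zero, Finset.sum_mul]
      have h3 : ∀ w, (c w • e w) * X a = if w = src a then c w • X a else 0 := by
        intro w
        rw [smul_mul_assoc, heX a w]
        split_ifs <;> simp
      rw [Finset.sum_congr rfl (fun w _ => h3 w),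
        Finset.sum_ite_eq' Finset.univ (src a) (fun w => c w • X a)]
      simp
    have hfXa : f (X a) ≠ 0 := by
      intro h0
      apply hXa0
      apply hfR
      intro y
      obtain ⟨c, hc⟩ := hXaA y
      rw [hc, map_smul, h0, smul_zero]
    have hvv : tgt a = src a := by
      by_contra hnev
      apply hfXa
      have h3 : X a = e (src a) * (X a * e (tgt a)) := by rw [(harr a).2, (harr a).1]
      rw [h3, hfsym, mul_assoc, horth, if_neg hnev, mul_zero, map_zero]
    have hevXa : e (src a) * X a = X a := (harr a).1
    have hXaev : X a * e (src a) = X a := by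
      rw [← hvv]; exact (harr a).2
    -- one-dimensionality of socle components
    have hUL : ∀ s t : A, s ≠ 0 → t ≠ 0 → e (src a) * s = s → e (src a) * t = t →
        (∀ j ∈ J, j * s = 0) → (∀ j ∈ J, j * t = 0) → ∃ c : K, c ≠ 0 ∧ t = c • s := by
      intro s t hs0 ht0 hes het hjs hjt
      have hval : ∀ (s' : A), e (src a) * s' = s' → (∀ j ∈ J, j * s' = 0) →
          ∀ (y : A) (c : V → K) (j : A), j ∈ J → y = (∑ w, c w • e w) + j →
          f (y * s') = c (src a) * f s' := by
        intro s' hes' hjs' y c j hj hy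
        rw [hy, add_mul, hjs' j hj, add_zero]
        conv_lhs => rw [← hes']
        rw [← mul_assoc, hmul_sum_e c (src a), smul_mul_assoc, hes', map_smul, smul_eq_mul]
      have hfs : f s ≠ 0 := by
        intro h0
        apply hs0
        apply hfL
        intro y
        obtain ⟨c, j, hj, hy⟩ := hdecomp y
        rw [hval s hes hjs y c j hj hy, h0, mul_zero]
      have hft : f t ≠ 0 := by
        intro h0
        apply ht0
        apply hfL
        intro y
        obtain ⟨c, j, hj, hy⟩ := hdecomp y
        rw [hval t het hjt y c j hj hy, h0, mul_zero]
      have hdiff : f t • s - f s • t = 0 := by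
        apply hfL
        intro y
        obtain ⟨c, j, hj, hy⟩ := hdecomp y
        have h4 : y * (f t • s - f s • t) = f t • (y * s) - f s • (y * t) := by
          rw [mul_sub, mul_smul_comm, mul_smul_comm]
        rw [h4, map_sub, map_smul, map_smul, hval s hes hjs y c j hj hy,
          hval t het hjt y c j hj hy, smul_eq_mul, smul_eq_mul]
        ring
      refine ⟨(f s)⁻¹ * f t, mul_ne_zero (inv_ne_zero hfs) hft, ?_⟩
      have h5 : f t • s = f s • t := sub_eq_zero.1 hdiff
      rw [mul_smul, h5, smul_smul, inv_mul_cancel₀ hfs, one_smul]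
    have hUR : ∀ s t : A, s ≠ 0 → t ≠ 0 → s * e (src a) = s → t * e (src a) = t →
        (∀ j ∈ J, s * j = 0) → (∀ j ∈ J, t * j = 0) → ∃ c : K, c ≠ 0 ∧ t = c • s := by
      intro s t hs0 ht0 hes het hjs hjt
      have hval : ∀ (s' : A), s' * e (src a) = s' → (∀ j ∈ J, s' * j = 0) →
          ∀ (y : A) (c : V → K) (j : A), j ∈ J → y = (∑ w, c w • e w) + j →
          f (s' * y) = c (src a) * f s' := by
        intro s' hes' hjs' y c j hj hy
        rw [hy, mul_add, hjs' j hj, add_zero]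
        conv_lhs => rw [← hes']
        rw [mul_assoc, he_sum c (src a), mul_smul_comm, hes', map_smul, smul_eq_mul]
      have hfs : f s ≠ 0 := by
        intro h0
        apply hs0
        apply hfR
        intro y
        obtain ⟨c, j, hj, hy⟩ := hdecomp y
        rw [hval s hes hjs y c j hj hy, h0, mul_zero]
      have hft : f t ≠ 0 := by
        intro h0
        apply ht0
        apply hfR
        intro y
        obtain ⟨c, j, hj, hy⟩ := hdecomp y
        rw [hval t het hjt y c j hj hy, h0, mul_zero]
      have hdiff : f t • s - f s • t = 0 := by
        apply hfR
        intro y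
        obtain ⟨c, j, hj, hy⟩ := hdecomp y
        have h4 : (f t • s - f s • t) * y = f t • (s * y) - f s • (t * y) := by
          rw [sub_mul, smul_mul_assoc, smul_mul_assoc]
        rw [h4, map_sub, map_smul, map_smul, hval s hes hjs y c j hj hy,
          hval t het hjt y c j hj hy, smul_eq_mul, smul_eq_mul]
        ring
      refine ⟨(f s)⁻¹ * f t, mul_ne_zero (inv_ne_zero hfs) hft, ?_⟩
      have h5 : f t • s = f s • t := sub_eq_zero.1 hdiff
      rw [mul_smul, h5, smul_smul, inv_mul_cancel₀ hfs, one_smul]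
    -- the only arrow starting at src a is a
    have honly_out : ∀ b : E, src b = src a → b = a := by
      intro b hb
      by_contra hba
      have hsoc : ∃ u : A, X b * u ≠ 0 ∧ ∀ j ∈ J, (X b * u) * j = 0 := by
        by_cases hcase : ∀ j ∈ J, X b * j = 0
        · exact ⟨1, by rw [mul_one]; exact hXne b, fun j hj => by rw [mul_one]; exact hcase j hj⟩
        · push_neg at hcase
          obtain ⟨j₀, hj₀, hj₀ne⟩ := hcase
          have hQn : ∀ z ∈ Stmt17Aux.jpow J n, X b * z = 0 := by
            intro z hz
            rw [hnil] at hz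
            rw [(Submodule.mem_bot A).1 hz, mul_zero]
          have hQ0 : ¬ ∀ z ∈ Stmt17Aux.jpow J 0, X b * z = 0 := fun h => hj₀ne (h j₀ hj₀)
          obtain ⟨k, hk1, hk2⟩ := Stmt17Aux.exists_min
            (Q := fun k => ∀ z ∈ Stmt17Aux.jpow J k, X b * z = 0) hQ0 hQn
          push_neg at hk1
          obtain ⟨z, hz, hzne⟩ := hk1
          exact ⟨z, hzne, fun j hj => by
            rw [mul_assoc]
            exact hk2 _ (Stmt17Aux.mul_mem_jpowR hJr hz hj)⟩
      obtain ⟨u, hu0, huann⟩ := hsoc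
      have hleft : ∀ j ∈ J, j * (X b * u) = 0 := hflipRL _ huann
      have hevXb : e (src a) * X b = X b := by rw [← hb]; exact (harr b).1
      have hev : e (src a) * (X b * u) = X b * u := by rw [← mul_assoc, hevXb]
      obtain ⟨c, hc0, hc⟩ := hUL (X a) (X b * u) hXa0 hu0 hevXa hev h2 hleft
      obtain ⟨d, j, hj, rfl⟩ := hdecomp u
      have hXbu : X b * ((∑ w, d w • e w) + j) = d (tgt b) • X b + X b * j := by
        rw [mul_add, Finset.mul_sum]
        congr 1
        have h3 : ∀ w, X b * (d w • e w) = if tgt b = w then d w • X b else 0 := by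
          intro w
          rw [mul_smul_comm, hXe b w]
          split_ifs <;> simp
        rw [Finset.sum_congr rfl (fun w _ => h3 w),
          Finset.sum_ite_eq Finset.univ (tgt b) (fun w => d w • X b)]
        simp
      have hmemJ2 : X b * j ∈ Submodule.span K {z : A | ∃ x ∈ J, ∃ y ∈ J, z = x * y} :=
        Submodule.subset_span ⟨X b, hrad b, j, hj, rfl⟩
      have hXa_eq : X a - (c⁻¹ * d (tgt b)) • X b = c⁻¹ • (X b * j) := by
        have h5 : X a = c⁻¹ • (X b * ((∑ w, d w • e w) + j)) := by
          rw [hc, smul_smul, inv_mul_cancel₀ hc0, one_smul]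
        rw [h5, hXbu, smul_add, smul_smul]
        abel
      have hsum0 : (∑ x, ((if x = a then (1:K) else 0) + (if x = b then -(c⁻¹ * d (tgt b)) else 0)) • X x)
          ∈ Submodule.span K {z : A | ∃ x ∈ J, ∃ y ∈ J, z = x * y} := by
        have hs : (∑ x, ((if x = a then (1:K) else 0) + (if x = b then -(c⁻¹ * d (tgt b)) else 0)) • X x)
            = X a - (c⁻¹ * d (tgt b)) • X b := by
          simp only [add_smul, Finset.sum_add_distrib, ite_smul, one_smul, zero_smul,
            Finset.sum_ite_eq', Finset.mem_univ, if_true, neg_smul]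
          abel
        rw [hs, hXa_eq]
        exact Submodule.smul_mem _ _ hmemJ2
      have h7 := congrFun (hadm _ hsum0) a
      rw [if_pos rfl, if_neg (fun h => hba h.symm)] at h7
      simp at h7
    -- the only arrow ending at src a is a
    have honly_in : ∀ b : E, tgt b = src a → b = a := by
      intro b hb
      by_contra hba
      have hsoc : ∃ u : A, u * X b ≠ 0 ∧ ∀ j ∈ J, j * (u * X b) = 0 := by
        by_cases hcase : ∀ j ∈ J, j * X b = 0
        · exact ⟨1, by rw [one_mul]; exact hXne b, fun j hj => by rw [one_mul]; exact hcase j hj⟩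
        · push_neg at hcase
          obtain ⟨j₀, hj₀, hj₀ne⟩ := hcase
          have hQn : ∀ z ∈ Stmt17Aux.jpow J n, z * X b = 0 := by
            intro z hz
            rw [hnil] at hz
            rw [(Submodule.mem_bot A).1 hz, zero_mul]
          have hQ0 : ¬ ∀ z ∈ Stmt17Aux.jpow J 0, z * X b = 0 := fun h => hj₀ne (h j₀ hj₀)
          obtain ⟨k, hk1, hk2⟩ := Stmt17Aux.exists_min
            (Q := fun k => ∀ z ∈ Stmt17Aux.jpow J k, z * X b = 0) hQ0 hQn
          push_neg at hk1
          obtain ⟨z, hz, hzne⟩ := hk1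
          exact ⟨z, hzne, fun j hj => by
            rw [← mul_assoc]
            exact hk2 _ (Stmt17Aux.mul_mem_jpowL hj hz)⟩
      obtain ⟨u, hu0, huann⟩ := hsoc
      have hright : ∀ j ∈ J, (u * X b) * j = 0 := hflipLR _ huann
      have hXbev : X b * e (src a) = X b := by rw [← hb]; exact (harr b).2
      have hev : (u * X b) * e (src a) = u * X b := by rw [mul_assoc, hXbev]
      obtain ⟨c, hc0, hc⟩ := hUR (X a) (u * X b) hXa0 hu0 hXaev hev h1 hright
      obtain ⟨d, j, hj, rfl⟩ := hdecomp u
      have hXbu : ((∑ w, d w • e w) + j) * X b = d (src b) • X b + j * X b := by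
        rw [add_mul, Finset.sum_mul]
        congr 1
        have h3 : ∀ w, (d w • e w) * X b = if w = src b then d w • X b else 0 := by
          intro w
          rw [smul_mul_assoc, heX b w]
          split_ifs <;> simp
        rw [Finset.sum_congr rfl (fun w _ => h3 w),
          Finset.sum_ite_eq' Finset.univ (src b) (fun w => d w • X b)]
        simp
      have hmemJ2 : j * X b ∈ Submodule.span K {z : A | ∃ x ∈ J, ∃ y ∈ J, z = x * y} :=
        Submodule.subset_span ⟨j, hj, X b, hrad b, rfl⟩
      have hXa_eq : X a - (c⁻¹ * d (src b)) • X b = c⁻¹ • (j * X b) := by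
        have h5 : X a = c⁻¹ • (((∑ w, d w • e w) + j) * X b) := by
          rw [hc, smul_smul, inv_mul_cancel₀ hc0, one_smul]
        rw [h5, hXbu, smul_add, smul_smul]
        abel
      have hsum0 : (∑ x, ((if x = a then (1:K) else 0) + (if x = b then -(c⁻¹ * d (src b)) else 0)) • X x)
          ∈ Submodule.span K {z : A | ∃ x ∈ J, ∃ y ∈ J, z = x * y} := by
        have hs : (∑ x, ((if x = a then (1:K) else 0) + (if x = b then -(c⁻¹ * d (src b)) else 0)) • X x)
            = X a - (c⁻¹ * d (src b)) • X b := by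
          simp only [add_smul, Finset.sum_add_distrib, ite_smul, one_smul, zero_smul,
            Finset.sum_ite_eq', Finset.mem_univ, if_true, neg_smul]
          abel
        rw [hs, hXa_eq]
        exact Submodule.smul_mem _ _ hmemJ2
      have h7 := congrFun (hadm _ hsum0) a
      rw [if_pos rfl, if_neg (fun h => hba h.symm)] at h7
      simp at h7
    -- e (src a) * J is contained in the line through X a
    have hevJ : ∀ j ∈ J, e (src a) * j ∈ Submodule.span K {X a} := by
      have key : ∀ k, ∀ j ∈ J, e (src a) * j ∈
          Submodule.span K {X a} ⊔ Submodule.restrictScalars K (Stmt17Aux.jpow J k) := by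
        intro k
        induction k with
        | zero => exact fun j hj => Submodule.mem_sup_right (Ideal.mul_mem_left _ _ hj)
        | succ k ih =>
          intro j hj
          have hj' : j ∈ Submodule.span K (Set.range X) ⊔
              Submodule.span K {z : A | ∃ x ∈ J, ∃ y ∈ J, z = x * y} := by
            rw [hradgen]; exact hj
          obtain ⟨p, hp, q, hq, rfl⟩ := Submodule.mem_sup.1 hj'
          clear hj hj'
          rw [mul_add]
          refine add_mem ?_ ?_
          · obtain ⟨c, hc⟩ := (Submodule.mem_span_range_iff_exists_fun K).1 hp
            rw [← hc, Finset.mul_sum]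
            refine Submodule.mem_sup_left (Submodule.sum_mem _ fun b _ => ?_)
            rw [mul_smul_comm, heX b (src a)]
            by_cases hbv : src a = src b
            · have hba : b = a := honly_out b hbv.symm
              rw [if_pos hbv, hba]
              exact Submodule.smul_mem _ _ (Submodule.mem_span_singleton_self _)
            · rw [if_neg hbv, smul_zero]
              exact Submodule.zero_mem _
          · induction hq using Submodule.span_induction with
            | mem z hz =>
              obtain ⟨x, hx, y, hy, rfl⟩ := hz
              rw [← mul_assoc]
              obtain ⟨p', hp', q', hq', heq⟩ := Submodule.mem_sup.1 (ih x hx)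
              rw [← heq, add_mul]
              obtain ⟨r, hr⟩ := Submodule.mem_span_singleton.1 hp'
              rw [← hr, smul_mul_assoc, h1 y hy, smul_zero, zero_add]
              exact Submodule.mem_sup_right (Stmt17Aux.mul_mem_jpowR hJr hq' hy)
            | zero => rw [mul_zero]; exact Submodule.zero_mem _
            | add u w hu hw hu' hw' => rw [mul_add]; exact add_mem hu' hw'
            | smul r u hu hu' =>
              rw [mul_smul_comm]
              exact Submodule.smul_mem _ _ hu'
      intro j hj
      have h6 := key n j hj
      rwa [hnil, Submodule.restrictScalars_bot, sup_bot_eq] at h6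
    have hJev : ∀ j ∈ J, j * e (src a) ∈ Submodule.span K {X a} := by
      have key : ∀ k, ∀ j ∈ J, j * e (src a) ∈
          Submodule.span K {X a} ⊔ Submodule.restrictScalars K (Stmt17Aux.jpow J k) := by
        intro k
        induction k with
        | zero => exact fun j hj => Submodule.mem_sup_right (hJr hj)
        | succ k ih =>
          intro j hj
          have hj' : j ∈ Submodule.span K (Set.range X) ⊔
              Submodule.span K {z : A | ∃ x ∈ J, ∃ y ∈ J, z = x * y} := by
            rw [hradgen]; exact hj
          obtain ⟨p, hp, q, hq, rfl⟩ := Submodule.mem_sup.1 hj'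
          clear hj hj'
          rw [add_mul]
          refine add_mem ?_ ?_
          · obtain ⟨c, hc⟩ := (Submodule.mem_span_range_iff_exists_fun K).1 hp
            rw [← hc, Finset.sum_mul]
            refine Submodule.mem_sup_left (Submodule.sum_mem _ fun b _ => ?_)
            rw [smul_mul_assoc, hXe b (src a)]
            by_cases hbv : tgt b = src a
            · have hba : b = a := honly_in b hbv
              rw [if_pos hbv, hba]
              exact Submodule.smul_mem _ _ (Submodule.mem_span_singleton_self _)
            · rw [if_neg hbv, smul_zero]
              exact Submodule.zero_mem _
          · induction hq using Submodule.span_induction with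
            | mem z hz =>
              obtain ⟨x, hx, y, hy, rfl⟩ := hz
              rw [mul_assoc]
              obtain ⟨p', hp', q', hq', heq⟩ := Submodule.mem_sup.1 (ih y hy)
              rw [← heq, mul_add]
              obtain ⟨r, hr⟩ := Submodule.mem_span_singleton.1 hp'
              rw [← hr, mul_smul_comm, h2 x hx, smul_zero, zero_add]
              exact Submodule.mem_sup_right (Stmt17Aux.mul_mem_jpowL hx hq')
            | zero => rw [zero_mul]; exact Submodule.zero_mem _
            | add u w hu hw hu' hw' => rw [add_mul]; exact add_mem hu' hw'
            | smul r u hu hu' =>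
              rw [smul_mul_assoc]
              exact Submodule.smul_mem _ _ hu'
      intro j hj
      have h6 := key n j hj
      rwa [hnil, Submodule.restrictScalars_bot, sup_bot_eq] at h6
    -- e (src a) is central
    have hcomm : ∀ y : A, y * e (src a) = e (src a) * y := by
      intro y
      obtain ⟨c, j, hj, rfl⟩ := hdecomp y
      rw [add_mul, mul_add]
      congr 1
      · rw [hmul_sum_e, he_sum]
      · obtain ⟨α, hα⟩ := Submodule.mem_span_singleton.1 (hevJ j hj)
        obtain ⟨β, hβ⟩ := Submodule.mem_span_singleton.1 (hJev j hj)
        have e3 : β • X a = α • X a := by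
          calc β • X a = β • (e (src a) * X a) := by rw [hevXa]
          _ = e (src a) * (β • X a) := (mul_smul_comm β (e (src a)) (X a)).symm
          _ = e (src a) * (j * e (src a)) := by rw [hβ]
          _ = (e (src a) * j) * e (src a) := (mul_assoc _ _ _).symm
          _ = (α • X a) * e (src a) := by rw [hα]
          _ = α • (X a * e (src a)) := smul_mul_assoc α _ _
          _ = α • X a := by rw [hXaev]
        calc j * e (src a) = β • X a := hβ.symm
        _ = α • X a := e3
        _ = e (src a) * j := hα
    have hidem : e (src a) * e (src a) = e (src a) := by rw [horth]; simp
    rcases hind (e (src a)) (Semigroup.mem_center_iff.mpr hcomm) hidem with h0 | hone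
    · exact hne (src a) h0
    · -- e (src a) = 1, so there is only one vertex and A = K ⊕ K (X a)
      have hall : ∀ w : V, w = src a := by
        intro w
        by_contra hw
        apply hne w
        have h8 : e w = e w * e (src a) := by rw [hone, mul_one]
        rw [h8, horth, if_neg hw]
      have hspan1 : ∀ y : A, ∃ α β : K, y = α • (1:A) + β • X a := by
        intro y
        obtain ⟨c, j, hj, rfl⟩ := hdecomp y
        obtain ⟨β, hβ⟩ := Submodule.mem_span_singleton.1 (hevJ j hj)
        refine ⟨∑ w, c w, β, ?_⟩
        have h9 : (∑ w, c w • e w) = (∑ w, c w) • (1:A) := by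
          rw [Finset.sum_smul]
          refine Finset.sum_congr rfl fun w _ => ?_
          rw [hall w, hone]
        have h10 : j = β • X a := by
          rw [hβ, hone, one_mul]
        rw [h9, h10]
      have hXa2 : X a * X a = 0 := h1 (X a) (hrad a)
      have hXasq : X a ^ 2 = 0 := by rw [pow_two]; exact hXa2
      have hindep : ∀ α β : K, α • (1:A) + β • X a = 0 → α = 0 ∧ β = 0 := by
        intro α β h
        have h11 : (α • (1:A) + β • X a) * X a = α • X a := by
          rw [add_mul, smul_mul_assoc, one_mul, smul_mul_assoc, hXa2, smul_zero, add_zero]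
        rw [h, zero_mul] at h11
        have hα : α = 0 := by
          rcases smul_eq_zero.1 h11.symm with h' | h'
          · exact h'
          · exact absurd h' hXa0
        refine ⟨hα, ?_⟩
        rw [hα, zero_smul, zero_add] at h
        rcases smul_eq_zero.1 h with h' | h'
        · exact h'
        · exact absurd h' hXa0
      -- A is isomorphic to K[X]/(X²)
      have hφX : (Polynomial.aeval (X a) : Polynomial K →ₐ[K] A) Polynomial.X = X a :=
        Polynomial.aeval_X _
      have hsurj : Function.Surjective (Polynomial.aeval (X a) : Polynomial K →ₐ[K] A) := by
        intro y
        obtain ⟨α, β, rfl⟩ := hspan1 y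
        refine ⟨Polynomial.C α + Polynomial.C β * Polynomial.X, ?_⟩
        rw [map_add, map_mul, Polynomial.aeval_C, Polynomial.aeval_C, Polynomial.aeval_X,
          Algebra.algebraMap_eq_smul_one, Algebra.algebraMap_eq_smul_one,
          smul_mul_assoc, one_mul]
      have hker : RingHom.ker (Polynomial.aeval (X a) : Polynomial K →ₐ[K] A)
          = Ideal.span {(Polynomial.X : Polynomial K) ^ 2} := by
        apply le_antisymm
        · intro p hp
          have hp0 : (Polynomial.aeval (X a)) p = 0 := hp
          have hmon : (Polynomial.X ^ 2 : Polynomial K).Monic := Polynomial.monic_X_pow 2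
          have hdiv := Polynomial.modByMonic_add_div p (Polynomial.X ^ 2)
          have hφr : (Polynomial.aeval (X a)) (p %ₘ (Polynomial.X ^ 2)) = 0 := by
            have h13 : (Polynomial.aeval (X a))
                (p %ₘ (Polynomial.X ^ 2) + Polynomial.X ^ 2 * (p /ₘ Polynomial.X ^ 2)) = 0 := by
              rw [hdiv]; exact hp0
            rw [map_add, map_mul, map_pow, hφX, hXasq, zero_mul, add_zero] at h13
            exact h13
          have hdeg : (p %ₘ (Polynomial.X ^ 2)).degree ≤ 1 := by
            have h12 : (p %ₘ (Polynomial.X ^ 2)).degree < (Polynomial.X ^ 2 : Polynomial K).degree :=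
              Polynomial.degree_modByMonic_lt p hmon
            rw [Polynomial.degree_X_pow] at h12
            rcases hd : (p %ₘ (Polynomial.X ^ 2)).degree with _ | k
            · exact bot_le
            · rw [hd] at h12
              have hk : k < 2 := by
                exact_mod_cast (show ((k : ℕ) : WithBot ℕ) < 2 from h12)
              have hk1 : k ≤ 1 := by omega
              exact (show ((k : ℕ) : WithBot ℕ) ≤ 1 by exact_mod_cast hk1)
          have hre := Polynomial.eq_X_add_C_of_degree_le_one hdeg
          rw [hre] at hφr
          rw [map_add, map_mul, Polynomial.aeval_C, Polynomial.aeval_C, Polynomial.aeval_X,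
            Algebra.algebraMap_eq_smul_one, Algebra.algebraMap_eq_smul_one,
            smul_mul_assoc, one_mul, add_comm] at hφr
          obtain ⟨h0', h1'⟩ := hindep _ _ hφr
          have hr0 : p %ₘ (Polynomial.X ^ 2) = 0 := by
            rw [hre, h0', h1']
            simp
          have h14 : p = Polynomial.X ^ 2 * (p /ₘ Polynomial.X ^ 2) := by
            conv_lhs => rw [← hdiv, hr0, zero_add]
          have h15 : Polynomial.X ^ 2 * (p /ₘ Polynomial.X ^ 2) ∈
              Ideal.span {(Polynomial.X : Polynomial K) ^ 2} :=
            Ideal.mul_mem_right _ _ (Ideal.subset_span rfl)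
          rwa [← h14] at h15
        · rw [Ideal.span_le]
          rintro q hq
          simp only [Set.mem_singleton_iff] at hq
          subst hq
          rw [SetLike.mem_coe, RingHom.mem_ker, map_pow, hφX, hXasq]
      exact hnot ⟨((Ideal.quotientKerAlgEquivOfSurjective hsurj).symm.trans
        (Ideal.quotientEquivAlgOfEq K hker))⟩
  intro a
  constructor
  · have hex : ∃ a' : E, X a' * X a ≠ 0 := by
      by_contra hco
      push_neg at hco
      have h2 := hannL a hco
      have h1 := hflipLR (X a) h2
      exact hcore a h1 h2
    obtain ⟨a', ha'⟩ := hex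
    exact ⟨a', ha', fun y hy => huniqL a y a' hy ha'⟩
  · have hex : ∃ a'' : E, X a * X a'' ≠ 0 := by
      by_contra hco
      push_neg at hco
      have h1 := hannR a hco
      have h2 := hflipRL (X a) h1
      exact hcore a h1 h2
    obtain ⟨a'', ha''⟩ := hex
    exact ⟨a'', ha'', fun y hy => huniqR a y a'' hy ha''⟩
end

section
/- Let r ≥ 1, u ≥ 1 with r·u odd (so r odd and u odd). Then the group ℤ^{u+1} / C·ℤ^{u+1}, where C is the integer matrix with (1,1)-entry 4r, remaining border entries 2r, and lower-right block I_u + r·J_u, is isomorphic to ℤ/2 × ℤ/2r. -/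
namespace Stmt18Aux

variable (u r : ℕ)

/-- The comparison map to `ℤ/2 × ℤ/2r`. -/
def psi : (Fin (u + 1) → ℤ) →+ ZMod 2 × ZMod (2 * r) where
  toFun x := (((∑ j : Fin u, x j.succ : ℤ) : ZMod 2), ((x 0 : ℤ) : ZMod (2 * r)))
  map_zero' := by simp
  map_add' x y := by
    simp [Finset.sum_add_distrib, Prod.ext_iff]

variable {u r}

lemma val_one (hu : 1 ≤ u) : ((1 : Fin (u + 1)) : ℕ) = 1 := by
  have : (1:ℕ) < u + 1 := by omega
  simp [Fin.val_one', Nat.mod_eq_of_lt this]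

lemma mem1 (hu : 1 ≤ u) (i : Fin (u + 1)) (hi : (i : ℕ) ≠ 0) :
    (Pi.single i 1 - Pi.single (1 : Fin (u + 1)) 1 : Fin (u + 1) → ℤ) ∈
      LinearMap.range (Matrix.mulVecLin (cartanGam u r)) := by
  refine ⟨Pi.single i 1 - Pi.single (1 : Fin (u + 1)) 1, ?_⟩
  rw [map_sub, Matrix.mulVecLin_apply, Matrix.mulVecLin_apply, Matrix.mulVec_single,
    Matrix.mulVec_single]
  funext k
  have h1 : ((1 : Fin (u + 1)) : ℕ) = 1 := val_one hu
  simp only [Pi.sub_apply, Pi.single_apply, cartanGam, Matrix.of_apply, h1, hi,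
    Pi.smul_apply, Matrix.col_apply, op_smul_eq_mul]
  by_cases hk : (k : ℕ) = 0
  · have hki : ¬ k = i := fun h => hi (h ▸ hk)
    have hk1 : ¬ k = (1 : Fin (u + 1)) := fun h => by rw [h, h1] at hk; omega
    simp [hk, hki, hk1]
  · have : ¬ ((1 : Fin (u+1)) : ℕ) = 0 := by omega
    simp only [hk, if_neg hk, if_neg this, if_false]
    by_cases hki : k = i <;> by_cases hk1 : k = (1 : Fin (u+1)) <;>
      simp [hki, hk1, eq_comm] <;> ring

lemma mem2 (hu : 1 ≤ u) :
    (Pi.single (1 : Fin (u + 1)) (2 : ℤ)) ∈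
      LinearMap.range (Matrix.mulVecLin (cartanGam u r)) := by
  refine ⟨Pi.single (1 : Fin (u + 1)) 2 - Pi.single (0 : Fin (u + 1)) 1, ?_⟩
  rw [map_sub, Matrix.mulVecLin_apply, Matrix.mulVecLin_apply, Matrix.mulVec_single,
    Matrix.mulVec_single]
  funext k
  have h1 : ((1 : Fin (u + 1)) : ℕ) = 1 := val_one hu
  simp only [Pi.sub_apply, Pi.single_apply, cartanGam, Matrix.of_apply, h1,
    Pi.smul_apply, Matrix.col_apply, op_smul_eq_mul]
  by_cases hk : (k : ℕ) = 0
  · have hk1 : ¬ k = (1 : Fin (u + 1)) := fun h => by rw [h, h1] at hk; omega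
    simp [hk, hk1]
    ring
  · have hu0 : ¬ u = 0 := by omega
    by_cases hk1 : k = (1 : Fin (u+1))
    all_goals simp [hk, hk1, h1, eq_comm, hu0]
    all_goals ring

lemma mem3 {m : ℕ} (hm : r * u + 1 = 2 * m) :
    (Pi.single (0 : Fin (u + 1)) (2 * r : ℤ)) ∈
      LinearMap.range (Matrix.mulVecLin (cartanGam u r)) := by
  have hm' : (2 : ℤ) * m = r * u + 1 := by exact_mod_cast hm.symm
  refine ⟨fun j => if (j : ℕ) = 0 then (m : ℤ) else -(r : ℤ), ?_⟩
  rw [Matrix.mulVecLin_apply]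
  funext k
  rw [Matrix.mulVec]
  refine Fin.cases ?_ (fun k' => ?_) k
  · simp only [cartanGam, dotProduct, Matrix.of_apply, Fin.sum_univ_succ, Fin.val_succ,
      Fin.val_zero, if_true, Nat.succ_ne_zero, if_false, Pi.single_apply, if_pos rfl,
      Finset.sum_const, Finset.card_univ, Fintype.card_fin, nsmul_eq_mul, eq_self_iff_true]
    push_cast
    linear_combination 2 * (r : ℤ) * hm'
  · simp only [cartanGam, dotProduct, Matrix.of_apply, Fin.sum_univ_succ, Fin.val_succ,
      Fin.val_zero, Nat.succ_ne_zero, if_false, Pi.single_apply, Fin.succ_inj,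
      (Fin.succ_ne_zero k'), add_mul, Finset.sum_add_distrib, Finset.sum_const,
      Finset.card_univ, Fintype.card_fin, nsmul_eq_mul, ite_mul, zero_mul, one_mul,
      Finset.sum_ite_eq, Finset.mem_univ, if_true]
    push_cast
    linear_combination (r : ℤ) * hm'

lemma mem_ker_iff (x : Fin (u + 1) → ℤ) :
    x ∈ (psi u r).ker ↔ (2 : ℤ) ∣ (∑ j : Fin u, x j.succ) ∧ (2 * r : ℤ) ∣ x 0 := by
  simp only [AddMonoidHom.mem_ker, psi, AddMonoidHom.coe_mk, ZeroHom.coe_mk, Prod.ext_iff,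
    Prod.fst_zero, Prod.snd_zero, ZMod.intCast_zmod_eq_zero_iff_dvd]
  push_cast
  tauto

lemma range_le_ker (hodd : Odd (r * u)) :
    (LinearMap.range (Matrix.mulVecLin (cartanGam u r))).toAddSubgroup ≤ (psi u r).ker := by
  intro x hx
  obtain ⟨v, rfl⟩ := hx
  rw [Matrix.mulVecLin_apply, mem_ker_iff]
  obtain ⟨c, hc⟩ := hodd
  have hc' : (r : ℤ) * u = 2 * c + 1 := by exact_mod_cast hc
  constructor
  · have : ∀ i : Fin u, (cartanGam u r).mulVec v i.succ
        = 2 * r * v 0 + (∑ j : Fin u, (if i = j then 1 else 0) * v j.succ)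
          + r * ∑ j : Fin u, v j.succ := by
      intro i
      rw [Matrix.mulVec]
      simp only [cartanGam, dotProduct, Matrix.of_apply, Fin.sum_univ_succ, Fin.val_succ,
        Fin.val_zero, Nat.succ_ne_zero, if_false, Fin.succ_inj, add_mul,
        Finset.sum_add_distrib, Finset.mul_sum]
      simp only [if_true]
      ring
    rw [Finset.sum_congr rfl fun i _ => this i]
    simp only [Finset.sum_add_distrib, Finset.sum_const, Finset.card_univ, Fintype.card_fin,
      nsmul_eq_mul, ite_mul, one_mul, zero_mul, Finset.sum_ite_eq, Finset.mem_univ, if_true]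
    refine ⟨(r : ℤ) * u * v 0 + (c + 1) * ∑ j : Fin u, v j.succ, ?_⟩
    push_cast
    linear_combination (∑ j : Fin u, v j.succ) * hc'
  · rw [Matrix.mulVec]
    simp only [cartanGam, dotProduct, Matrix.of_apply, Fin.sum_univ_succ, Fin.val_succ,
      Fin.val_zero, Nat.succ_ne_zero, if_false, if_true, Finset.mul_sum]
    refine ⟨2 * v 0 + ∑ j : Fin u, v j.succ, ?_⟩
    rw [mul_add, Finset.mul_sum]
    congr 1 <;> ring

lemma ker_le_range (hu : 1 ≤ u) {m : ℕ} (hm : r * u + 1 = 2 * m) :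
    (psi u r).ker ≤
      (LinearMap.range (Matrix.mulVecLin (cartanGam u r))).toAddSubgroup := by
  intro x hx
  rw [mem_ker_iff] at hx
  obtain ⟨⟨b, hb⟩, ⟨a, ha⟩⟩ := hx
  have h1 : ((1 : Fin (u + 1)) : ℕ) = 1 := val_one hu
  have hxeq : x = a • Pi.single (0 : Fin (u + 1)) (2 * r : ℤ)
      + b • Pi.single (1 : Fin (u + 1)) (2 : ℤ)
      + ∑ j : Fin u, x j.succ •
          (Pi.single (j.succ : Fin (u + 1)) 1 - Pi.single (1 : Fin (u + 1)) 1) := by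
    funext k
    simp only [Pi.add_apply, Pi.smul_apply, Finset.sum_apply, Pi.sub_apply, smul_eq_mul,
      Pi.single_apply]
    refine Fin.cases ?_ (fun k' => ?_) k
    · have h01 : ¬ (0 : Fin (u + 1)) = 1 := fun h => by
        have := congrArg (Fin.val) h; rw [h1] at this; simp at this
      simp [h01, (fun j : Fin u => (Fin.succ_ne_zero j).symm), ha, mul_comm]
    · by_cases hk1 : k'.succ = (1 : Fin (u + 1))
      · simp only [if_neg (Fin.succ_ne_zero k'), if_pos hk1, mul_sub, mul_one, mul_ite,
          mul_zero, Finset.sum_sub_distrib, Fin.succ_inj, Finset.sum_ite_eq,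
          Finset.sum_ite_eq', Finset.mem_univ, if_true]
        rw [hb]
        ring
      · simp only [if_neg (Fin.succ_ne_zero k'), if_neg hk1, mul_sub, mul_one, mul_zero,
          sub_zero, mul_ite, Fin.succ_inj, Finset.sum_ite_eq, Finset.sum_ite_eq',
          Finset.mem_univ, if_true]
        ring
  rw [hxeq]
  have hmm := hm
  refine AddSubgroup.add_mem _ (AddSubgroup.add_mem _ ?_ ?_) ?_
  · exact Submodule.smul_mem _ a (mem3 hm)
  · exact Submodule.smul_mem _ b (mem2 hu)
  · exact Submodule.sum_mem _ fun j _ =>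
      Submodule.smul_mem _ _ (mem1 hu j.succ (by simp [Fin.val_succ]))

lemma psi_surj (hu : 1 ≤ u) : Function.Surjective (psi u r) := by
  rintro ⟨p, q⟩
  obtain ⟨c, rfl⟩ := ZMod.intCast_surjective p
  obtain ⟨d, rfl⟩ := ZMod.intCast_surjective q
  have h1 : ((1 : Fin (u + 1)) : ℕ) = 1 := val_one hu
  have h01 : ¬ (0 : Fin (u + 1)) = 1 := fun h => by
    have := congrArg Fin.val h; rw [h1] at this; simp at this
  refine ⟨Pi.single (1 : Fin (u + 1)) c + Pi.single (0 : Fin (u + 1)) d, ?_⟩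
  set j0 : Fin u := ⟨0, hu⟩ with hj0
  have key : ∀ j : Fin u, (j.succ = (1 : Fin (u + 1))) ↔ (j = j0) := by
    intro j
    simp only [Fin.ext_iff, Fin.val_succ, h1, hj0]
    omega
  have hsum : (∑ j : Fin u,
      (Pi.single (1 : Fin (u + 1)) c + Pi.single (0 : Fin (u + 1)) d :
        Fin (u + 1) → ℤ) j.succ) = c := by
    have hterm : ∀ j : Fin u,
        ((Pi.single (1 : Fin (u + 1)) c + Pi.single (0 : Fin (u + 1)) d :
          Fin (u + 1) → ℤ)) j.succ
          = if j = j0 then c else 0 := fun j => by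
      simp [Pi.single_apply, Fin.succ_ne_zero j, key j]
    rw [Finset.sum_congr rfl fun j _ => hterm j,
      Finset.sum_ite_eq' Finset.univ j0 fun _ => c]
    simp
  have h0 : (Pi.single (1 : Fin (u + 1)) c + Pi.single (0 : Fin (u + 1)) d :
      Fin (u + 1) → ℤ) 0 = d := by
    simp [Pi.single_apply, h01]
  simp only [psi, AddMonoidHom.coe_mk, ZeroHom.coe_mk, hsum, h0]

end Stmt18Aux

/-- For `r·u` odd, the cokernel `ℤ^{u+1}/C·ℤ^{u+1}` of the Cartan matrix `C` of `Γ(p,q;r)`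
is isomorphic to `ℤ/2 × ℤ/2r`. -/
theorem stmt18 (u r : ℕ) (hr : 1 ≤ r) (hu : 1 ≤ u) (hodd : Odd (r * u)) :
    Nonempty (((Fin (u + 1) → ℤ) ⧸
        (LinearMap.range (Matrix.mulVecLin (cartanGam u r))).toAddSubgroup) ≃+
      (ZMod 2 × ZMod (2 * r))) := by
  obtain ⟨c, hc⟩ := hodd
  have hm : r * u + 1 = 2 * (c + 1) := by omega
  have h : (LinearMap.range (Matrix.mulVecLin (cartanGam u r))).toAddSubgroup
      = (Stmt18Aux.psi u r).ker :=
    le_antisymm (Stmt18Aux.range_le_ker ⟨c, hc⟩) (Stmt18Aux.ker_le_range hu hm)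
  exact ⟨(QuotientAddGroup.quotientAddEquivOfEq h).trans
    (QuotientAddGroup.quotientKerEquivOfSurjective _ (Stmt18Aux.psi_surj hu))⟩
end
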